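/- arXiv:2001.01159 — 10 statements merged into one kernel-verified Lean document; each statement's English description precedes it below -/
import Mathlib

section
/- Let X and Y be random variables taking values in finite alphabets 𝒳 and 𝒴 with joint distribution P_{X,Y}, and let P_e denote the minimum probability of error in estimating X from Y, i.e., P_e = 1 − Σ_{y∈𝒴} max_{x∈𝒳} P_{X,Y}(x,y). Then for every α ∈ [0,1] and every θ ≥ 1, P_e ≥ (1 − α) · P_{X,Y}{ (x,y) ∈ 𝒳 × 𝒴 : P^{(θ)}_{X|Y}(x|y) ≤ α }. -/
open scoped Classical BigOperators

private lemma key {𝒳 : Type*} [Fintype 𝒳] [Nonempty 𝒳] (p : 𝒳 → ℝ) (hp : ∀ x, 0 ≤ p x)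
    (hp1 : ∑ x, p x = 1) (α θ : ℝ) (hα0 : 0 ≤ α) (hα1 : α ≤ 1) (hθ : 1 ≤ θ) :
    (1 - α) * ∑ x, (if (p x) ^ θ / (∑ u, (p u) ^ θ) ≤ α then p x else 0) ≤
      1 - Finset.univ.sup' Finset.univ_nonempty p := by
  obtain ⟨x0, -, hx0⟩ := Finset.exists_mem_eq_sup' (Finset.univ_nonempty (α := 𝒳)) p
  set m := Finset.univ.sup' Finset.univ_nonempty p with hm
  have hmx : ∀ x, p x ≤ m := fun x => Finset.le_sup' p (Finset.mem_univ x)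
  have hm0 : 0 ≤ m := le_trans (hp x0) (hmx x0)
  have hm1 : m ≤ 1 := by
    rw [hx0, ← hp1]
    exact Finset.single_le_sum (fun x _ => hp x) (Finset.mem_univ x0)
  by_cases hc : (p x0) ^ θ / (∑ u, (p u) ^ θ) ≤ α
  · -- the maximizer satisfies the condition: then m ≤ α
    have hmα : m ≤ α := by
      rcases eq_or_lt_of_le hm0 with h0 | h0
      · linarith
      · -- m > 0
        set S := ∑ u, (p u) ^ θ with hS
        have hterm : ∀ u, (p u) ^ θ ≤ m ^ (θ - 1) * p u := by
          intro u
          rcases eq_or_lt_of_le (hp u) with hu | hu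
          · rw [← hu, Real.zero_rpow (by linarith : θ ≠ 0), mul_zero]
          · have h1 : (p u : ℝ) ^ θ = (p u) ^ (θ - 1) * (p u) ^ (1 : ℝ) := by
              rw [← Real.rpow_add hu]; ring_nf
            rw [h1, Real.rpow_one]
            exact mul_le_mul_of_nonneg_right
              (Real.rpow_le_rpow (hp u) (hmx u) (by linarith)) (hp u)
        have hSle : S ≤ m ^ (θ - 1) := by
          calc S ≤ ∑ u, m ^ (θ - 1) * p u := Finset.sum_le_sum fun u _ => hterm u
            _ = m ^ (θ - 1) := by rw [← Finset.mul_sum, hp1, mul_one]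
        have hSpos : 0 < S := by
          have h2 : m ^ θ ≤ S := by
            rw [hx0]
            exact Finset.single_le_sum (fun u _ => Real.rpow_nonneg (hp u) θ)
              (Finset.mem_univ x0)
          exact lt_of_lt_of_le (Real.rpow_pos_of_pos h0 θ) h2
        have hq : m ≤ m ^ θ / S := by
          rw [le_div_iff₀ hSpos]
          have h3 : m ^ θ = m ^ (θ - 1) * m := by
            rw [← Real.rpow_add_one (ne_of_gt h0)]; ring_nf
          rw [h3]
          have := mul_le_mul_of_nonneg_right hSle hm0
          linarith [this]
        have hc' : m ^ θ / S ≤ α := by rw [hx0]; exact hc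
        linarith
    have hs1 : ∑ x, (if (p x) ^ θ / (∑ u, (p u) ^ θ) ≤ α then p x else 0) ≤ 1 := by
      rw [← hp1]
      refine Finset.sum_le_sum fun x _ => ?_
      split_ifs with h
      · exact le_refl _
      · exact hp x
    have := mul_le_mul_of_nonneg_left hs1 (by linarith : (0:ℝ) ≤ 1 - α)
    linarith
  · -- the maximizer fails the condition
    have hs : ∑ x, (if (p x) ^ θ / (∑ u, (p u) ^ θ) ≤ α then p x else 0) ≤ 1 - m := by
      calc ∑ x, (if (p x) ^ θ / (∑ u, (p u) ^ θ) ≤ α then p x else 0)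
          ≤ ∑ x, (p x - if x = x0 then p x else 0) := by
            refine Finset.sum_le_sum fun x _ => ?_
            by_cases hx : x = x0
            · subst hx
              rw [if_neg hc, if_pos rfl]
              linarith
            · rw [if_neg hx]
              split_ifs with h
              · linarith
              · linarith [hp x]
        _ = 1 - m := by
            rw [Finset.sum_sub_distrib, hp1, Finset.sum_ite_eq' Finset.univ x0 p,
              if_pos (Finset.mem_univ x0), hx0]
    have hs0 : 0 ≤ ∑ x, (if (p x) ^ θ / (∑ u, (p u) ^ θ) ≤ α then p x else 0) :=
      Finset.sum_nonneg fun x _ => by split_ifs with h; exacts [hp x, le_refl 0]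
    nlinarith

private lemma key2 {𝒳 : Type*} [Fintype 𝒳] [Nonempty 𝒳] (p' : 𝒳 → ℝ) (hp : ∀ x, 0 ≤ p' x)
    (α θ : ℝ) (hα0 : 0 ≤ α) (hα1 : α ≤ 1) (hθ : 1 ≤ θ) :
    (1 - α) * ∑ x, (if (p' x / ∑ v, p' v) ^ θ / (∑ u, (p' u / ∑ v, p' v) ^ θ) ≤ α
        then p' x else 0) ≤
      (∑ x, p' x) - Finset.univ.sup' Finset.univ_nonempty p' := by
  set T := ∑ v, p' v with hT
  have hT0 : 0 ≤ T := Finset.sum_nonneg fun x _ => hp x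
  rcases eq_or_lt_of_le hT0 with h0 | h0
  · -- T = 0 : everything is zero
    have hz : ∀ x, p' x = 0 := by
      intro x
      have := (Finset.sum_eq_zero_iff_of_nonneg (fun x _ => hp x)).mp h0.symm
      exact this x (Finset.mem_univ x)
    have hsup : Finset.univ.sup' Finset.univ_nonempty p' = 0 := by
      apply le_antisymm
      · exact Finset.sup'_le _ _ fun x _ => (hz x).le
      · obtain ⟨x⟩ := ‹Nonempty 𝒳›
        calc (0:ℝ) = p' x := (hz x).symm
          _ ≤ _ := Finset.le_sup' p' (Finset.mem_univ x)
    have hsum0 : ∑ x, (if (p' x / T) ^ θ / (∑ u, (p' u / T) ^ θ) ≤ α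
        then p' x else 0) = 0 :=
      Finset.sum_eq_zero fun x _ => by rw [hz x]; simp
    rw [hsum0, hsup, ← h0, mul_zero, sub_zero]
  · -- T > 0
    set p : 𝒳 → ℝ := fun x => p' x / T with hpdef
    have hTne : T ≠ 0 := ne_of_gt h0
    have hpnn : ∀ x, 0 ≤ p x := fun x => div_nonneg (hp x) hT0
    have hp1 : ∑ x, p x = 1 := by
      rw [hpdef]; rw [← Finset.sum_div, ← hT, div_self hTne]
    have hsup : Finset.univ.sup' Finset.univ_nonempty p =
        (Finset.univ.sup' Finset.univ_nonempty p') / T := by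
      apply le_antisymm
      · refine Finset.sup'_le _ _ fun x _ => ?_
        exact div_le_div_of_nonneg_right (Finset.le_sup' p' (Finset.mem_univ x)) hT0
      · obtain ⟨x0, -, hx0⟩ := Finset.exists_mem_eq_sup' (Finset.univ_nonempty (α := 𝒳)) p'
        rw [hx0]
        exact Finset.le_sup' p (Finset.mem_univ x0)
    have hkey := key p hpnn hp1 α θ hα0 hα1 hθ
    have hmul := mul_le_mul_of_nonneg_left hkey hT0
    have hL : T * ((1 - α) * ∑ x, (if (p x) ^ θ / (∑ u, (p u) ^ θ) ≤ α then p x else 0)) =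
        (1 - α) * ∑ x, (if (p' x / T) ^ θ / (∑ u, (p' u / T) ^ θ) ≤ α then p' x else 0) := by
      rw [← mul_assoc, mul_comm T (1 - α), mul_assoc, Finset.mul_sum]
      congr 1
      refine Finset.sum_congr rfl fun x _ => ?_
      rw [mul_ite, mul_zero]
      congr 1
      rw [hpdef]
      field_simp
    have hR : T * (1 - Finset.univ.sup' Finset.univ_nonempty p) =
        (∑ x, p' x) - Finset.univ.sup' Finset.univ_nonempty p' := by
      rw [hsup, mul_sub, mul_one, mul_div_cancel₀ _ hTne, ← hT]
    rw [hL, hR] at hmul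
    exact hmul

/-- **Generalized Poor–Verdú bound.**
`X`, `Y` are random variables on finite alphabets `𝒳`, `𝒴` with joint distribution `P`.
The minimum probability of error `P_e = 1 - ∑_y max_x P(x,y)` satisfies, for every
`α ∈ [0,1]` and `θ ≥ 1`,
`P_e ≥ (1 - α) · P_{X,Y}{(x,y) : P^{(θ)}_{X|Y}(x|y) ≤ α}`, where the tilted posterior is
`P^{(θ)}_{X|Y}(x|y) = P_{X|Y}(x|y)^θ / ∑_{u ∈ 𝒳} P_{X|Y}(u|y)^θ` and
`P_{X|Y}(x|y) = P(x,y) / ∑_v P(v,y)`. -/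
theorem stmt_0 {𝒳 𝒴 : Type*} [Fintype 𝒳] [Fintype 𝒴] [Nonempty 𝒳]
    (P : 𝒳 → 𝒴 → ℝ) (hP : ∀ x y, 0 ≤ P x y)
    (hsum : ∑ x, ∑ y, P x y = 1)
    (α θ : ℝ) (hα : α ∈ Set.Icc (0 : ℝ) 1) (hθ : 1 ≤ θ) :
    1 - ∑ y, Finset.univ.sup' Finset.univ_nonempty (fun x => P x y) ≥
      (1 - α) *
        ∑ q ∈ Finset.univ.filter (fun q : 𝒳 × 𝒴 =>
            (P q.1 q.2 / ∑ v, P v q.2) ^ θ /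
              (∑ u, (P u q.2 / ∑ v, P v q.2) ^ θ) ≤ α),
          P q.1 q.2 := by
  obtain ⟨hα0, hα1⟩ := hα
  rw [ge_iff_le]
  have h1 : (1:ℝ) = ∑ y, ∑ x, P x y := by rw [← hsum, Finset.sum_comm]
  have h2 : ∑ q ∈ Finset.univ.filter (fun q : 𝒳 × 𝒴 =>
        (P q.1 q.2 / ∑ v, P v q.2) ^ θ /
          (∑ u, (P u q.2 / ∑ v, P v q.2) ^ θ) ≤ α), P q.1 q.2 =
      ∑ y, ∑ x, (if (P x y / ∑ v, P v y) ^ θ / (∑ u, (P u y / ∑ v, P v y) ^ θ) ≤ α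
        then P x y else 0) := by
    rw [Finset.sum_filter, Fintype.sum_prod_type, Finset.sum_comm]
  nth_rewrite 2 [h1]
  rw [h2, ← Finset.sum_sub_distrib, Finset.mul_sum]
  refine Finset.sum_le_sum fun y _ => ?_
  exact key2 (fun x => P x y) (fun x => hP x y) α θ hα0 hα1 hθ
end

section
/- Let X and Y be random variables on finite alphabets 𝒳 and 𝒴 with joint distribution P_{X,Y}. The lower bound P_{X,Y}{ (x,y) : P_{X|Y}(x|y) < max_{u∈𝒳} P_{X|Y}(u|y) } equals the minimum probability of error P_e if and only if for every y ∈ 𝒴 with P_Y(y) > 0 the maximizer of x ↦ P_{X|Y}(x|y) is unique. -/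
open scoped Classical BigOperators

section Aux

variable {𝒳 : Type*} [Fintype 𝒳] [Nonempty 𝒳]

private noncomputable def msup (f : 𝒳 → ℝ) : ℝ :=
  Finset.univ.sup' Finset.univ_nonempty f

private lemma le_msup (f : 𝒳 → ℝ) (x : 𝒳) : f x ≤ msup f :=
  Finset.le_sup' f (Finset.mem_univ x)

private lemma exists_msup (f : 𝒳 → ℝ) : ∃ x, f x = msup f := by
  obtain ⟨x, -, hx⟩ := Finset.exists_mem_eq_sup' Finset.univ_nonempty f
  exact ⟨x, hx.symm⟩

private noncomputable def bsum (f : 𝒳 → ℝ) : ℝ :=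
  ∑ x ∈ Finset.univ.filter (fun x => f x = msup f), f x

private lemma msup_le_bsum (f : 𝒳 → ℝ) (hf : ∀ x, 0 ≤ f x) : msup f ≤ bsum f := by
  obtain ⟨x0, hx0⟩ := exists_msup f
  calc msup f = f x0 := hx0.symm
    _ ≤ bsum f := Finset.single_le_sum (fun i _ => hf i)
        (Finset.mem_filter.mpr ⟨Finset.mem_univ _, hx0⟩)

private lemma sum_filter_lt (f : 𝒳 → ℝ) :
    ∑ x ∈ Finset.univ.filter (fun x => f x < msup f), f x = (∑ x, f x) - bsum f := by
  have hfe : Finset.univ.filter (fun x => ¬ f x = msup f)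
      = Finset.univ.filter (fun x => f x < msup f) := by
    apply Finset.filter_congr
    intro x _
    constructor
    · intro h; exact lt_of_le_of_ne (le_msup f x) h
    · intro h; exact ne_of_lt h
  have := Finset.sum_filter_add_sum_filter_not Finset.univ (fun x => f x = msup f) f
  rw [hfe] at this
  have hb : bsum f = ∑ x ∈ Finset.univ.filter (fun x => f x = msup f), f x := rfl
  linarith

private lemma msup_pos (f : 𝒳 → ℝ) (hf : ∀ x, 0 ≤ f x) (hpos : 0 < ∑ x, f x) :
    0 < msup f := by
  obtain ⟨x, -, hx⟩ := Finset.exists_ne_zero_of_sum_ne_zero (ne_of_gt hpos)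
  exact lt_of_lt_of_le (lt_of_le_of_ne (hf x) (Ne.symm hx)) (le_msup f x)

private lemma bsum_eq_iff (f : 𝒳 → ℝ) (hf : ∀ x, 0 ≤ f x) :
    bsum f = msup f ↔ (0 < ∑ x, f x → ∃! x, ∀ u, f u ≤ f x) := by
  constructor
  · intro hB hpos
    have hMpos := msup_pos f hf hpos
    obtain ⟨x0, hx0⟩ := exists_msup f
    refine ⟨x0, fun u => hx0 ▸ le_msup f u, ?_⟩
    intro x hx
    have hxM : f x = msup f := le_antisymm (le_msup f x) (hx0 ▸ hx x0)
    by_contra hne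
    have hsub : ({x, x0} : Finset 𝒳) ⊆ Finset.univ.filter (fun u => f u = msup f) := by
      intro u hu
      rcases Finset.mem_insert.mp hu with rfl | hu
      · exact Finset.mem_filter.mpr ⟨Finset.mem_univ _, hxM⟩
      · rw [Finset.mem_singleton] at hu
        subst hu
        exact Finset.mem_filter.mpr ⟨Finset.mem_univ _, hx0⟩
    have h2 : f x + f x0 ≤ bsum f := by
      have := Finset.sum_le_sum_of_subset_of_nonneg hsub (fun i _ _ => hf i)
      rwa [Finset.sum_pair hne] at this
    rw [hB] at h2
    rw [hxM, hx0] at h2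
    linarith
  · intro h
    by_cases hpos : 0 < ∑ x, f x
    · obtain ⟨xs, hxs, huniq⟩ := h hpos
      obtain ⟨x0, hx0⟩ := exists_msup f
      have hxM : f xs = msup f := le_antisymm (le_msup f xs) (hx0 ▸ hxs x0)
      have hset : Finset.univ.filter (fun u => f u = msup f) = {xs} := by
        ext u
        simp only [Finset.mem_filter, Finset.mem_univ, true_and, Finset.mem_singleton]
        constructor
        · intro hu; exact huniq u (fun v => hu ▸ le_msup f v)
        · rintro rfl; exact hxM
      rw [bsum, hset, Finset.sum_singleton, hxM]
    · have hz : ∀ x, f x = 0 := by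
        have hle : ∑ x, f x ≤ 0 := not_lt.mp hpos
        have h0 : ∑ x, f x = 0 := le_antisymm hle (Finset.sum_nonneg fun i _ => hf i)
        intro x
        exact (Finset.sum_eq_zero_iff_of_nonneg (fun i _ => hf i)).mp h0 x (Finset.mem_univ x)
      have hM0 : msup f = 0 := by
        obtain ⟨x0, hx0⟩ := exists_msup f
        rw [← hx0, hz]
      rw [hM0, bsum]
      exact Finset.sum_eq_zero fun x _ => hz x

end Aux

/-- **Tightness criterion for the asymptotic bound.**
`X`, `Y` are random variables on finite alphabets with joint distribution `P`.
The lower bound `P_{X,Y}{(x,y) : P_{X|Y}(x|y) < max_{u∈𝒳} P_{X|Y}(u|y)}` equals the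
minimum probability of error `P_e = 1 - ∑_y max_x P(x,y)` if and only if for every
`y` with `P_Y(y) > 0` the maximizer of `x ↦ P_{X|Y}(x|y)` is unique, where
`P_{X|Y}(x|y) = P(x,y) / ∑_v P(v,y)`. -/
theorem stmt_5 {𝒳 𝒴 : Type*} [Fintype 𝒳] [Fintype 𝒴] [Nonempty 𝒳]
    (P : 𝒳 → 𝒴 → ℝ) (hP : ∀ x y, 0 ≤ P x y)
    (hsum : ∑ x, ∑ y, P x y = 1) :
    (∑ q ∈ Finset.univ.filter (fun q : 𝒳 × 𝒴 =>
          P q.1 q.2 / ∑ v, P v q.2 <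
            Finset.univ.sup' Finset.univ_nonempty fun u => P u q.2 / ∑ v, P v q.2),
        P q.1 q.2)
      = 1 - ∑ y, Finset.univ.sup' Finset.univ_nonempty (fun x => P x y)
    ↔ ∀ y : 𝒴, 0 < ∑ x, P x y →
        ∃! x : 𝒳, ∀ u : 𝒳, P u y / ∑ v, P v y ≤ P x y / ∑ v, P v y := by
  classical
  -- single-variable condition equivalence
  have hcond : ∀ (x : 𝒳) (y : 𝒴),
      (P x y / ∑ v, P v y <
        Finset.univ.sup' Finset.univ_nonempty fun u => P u y / ∑ v, P v y)
      ↔ P x y < msup (fun x' => P x' y) := by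
    intro x y
    have hS : (0:ℝ) ≤ ∑ v, P v y := Finset.sum_nonneg fun i _ => hP i y
    rcases hS.lt_or_eq with hpos | hzero
    · have hsup : (Finset.univ.sup' Finset.univ_nonempty fun u => P u y / ∑ v, P v y)
          = msup (fun x' => P x' y) / ∑ v, P v y := by
        apply le_antisymm
        · exact Finset.sup'_le _ _ fun u _ =>
            (div_le_div_iff_of_pos_right hpos).mpr (le_msup (fun x' => P x' y) u)
        · obtain ⟨x0, hx0⟩ := exists_msup (fun x' => P x' y)
          calc msup (fun x' => P x' y) / ∑ v, P v y = P x0 y / ∑ v, P v y := by rw [← hx0]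
            _ ≤ _ := Finset.le_sup' (fun u => P u y / ∑ v, P v y) (Finset.mem_univ x0)
      rw [hsup, div_lt_div_iff_of_pos_right hpos]
    · have hz : ∀ v, P v y = 0 := by
        intro v
        exact (Finset.sum_eq_zero_iff_of_nonneg (fun i _ => hP i y)).mp hzero.symm v
          (Finset.mem_univ v)
      simp [hz, msup]
  -- rewrite the double sum
  have hfilter : Finset.univ.filter (fun q : 𝒳 × 𝒴 =>
          P q.1 q.2 / ∑ v, P v q.2 <
            Finset.univ.sup' Finset.univ_nonempty fun u => P u q.2 / ∑ v, P v q.2)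
      = Finset.univ.filter (fun q : 𝒳 × 𝒴 => P q.1 q.2 < msup (fun x' => P x' q.2)) := by
    apply Finset.filter_congr
    intro q _
    exact hcond q.1 q.2
  have hLHS : (∑ q ∈ Finset.univ.filter (fun q : 𝒳 × 𝒴 =>
          P q.1 q.2 / ∑ v, P v q.2 <
            Finset.univ.sup' Finset.univ_nonempty fun u => P u q.2 / ∑ v, P v q.2),
        P q.1 q.2)
      = ∑ y, ((∑ x, P x y) - bsum (fun x => P x y)) := by
    rw [hfilter, Finset.sum_filter, Fintype.sum_prod_type_right]
    refine Finset.sum_congr rfl fun y _ => ?_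
    rw [← Finset.sum_filter]
    exact sum_filter_lt (fun x => P x y)
  have hMsup : ∀ y : 𝒴, Finset.univ.sup' Finset.univ_nonempty (fun x => P x y)
      = msup (fun x => P x y) := fun y => rfl
  have h1 : ∑ y, ∑ x, P x y = 1 := by rw [Finset.sum_comm]; exact hsum
  rw [hLHS]
  have key : (∑ y, ((∑ x, P x y) - bsum (fun x => P x y))
        = 1 - ∑ y, Finset.univ.sup' Finset.univ_nonempty (fun x => P x y))
      ↔ ∑ y, (bsum (fun x => P x y) - msup (fun x => P x y)) = 0 := by
    have hms : (∑ y, Finset.univ.sup' Finset.univ_nonempty fun x => P x y)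
        = ∑ y, msup (fun x => P x y) := rfl
    rw [Finset.sum_sub_distrib, Finset.sum_sub_distrib, h1, hms]
    constructor <;> intro h <;> linarith
  rw [key, Finset.sum_eq_zero_iff_of_nonneg
    (fun y _ => sub_nonneg.mpr (msup_le_bsum (fun x => P x y) (fun x => hP x y)))]
  constructor
  · intro h y hpos
    have hB : bsum (fun x => P x y) = msup (fun x => P x y) := by
      have := h y (Finset.mem_univ y)
      linarith [this]
    obtain ⟨xs, hxs, huniq⟩ := (bsum_eq_iff (fun x => P x y) (fun x => hP x y)).mp hB hpos
    refine ⟨xs, fun u => (div_le_div_iff_of_pos_right hpos).mpr (hxs u), ?_⟩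
    intro x hx
    exact huniq x fun u => (div_le_div_iff_of_pos_right hpos).mp (hx u)
  · intro h y _
    have hB : bsum (fun x => P x y) = msup (fun x => P x y) := by
      apply (bsum_eq_iff (fun x => P x y) (fun x => hP x y)).mpr
      intro hpos
      obtain ⟨xs, hxs, huniq⟩ := h y hpos
      refine ⟨xs, fun u => (div_le_div_iff_of_pos_right hpos).mp (hxs u), ?_⟩
      intro x hx
      exact huniq x fun u => (div_le_div_iff_of_pos_right hpos).mpr (hx u)
    linarith [hB]
end

section
/- Let X and Y be random variables on finite alphabets 𝒳 and 𝒴 with joint distribution P_{X,Y}, and suppose P_e < 1. Define γ* = Σ_{y∈𝒴} max_{x∈𝒳} P_{X,Y}(x,y) = 1 − P_e and the output distribution Q*_Y(y) = max_{x∈𝒳} P_{X,Y}(x,y) / γ*. Then Pr[ P_{X,Y}(X,Y)/Q*_Y(Y) ≤ γ* ] − γ* = P_e; i.e., the choice (Q*_Y, γ*) achieves the minimum error probability in the generalized Verdú-Han lower bound. -/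
open scoped Classical BigOperators

/-- **The optimizers of the generalized Verdú–Han bound achieve `P_e`.**
`X`, `Y` are random variables on finite alphabets with joint distribution `P`, and
`P_e = 1 - ∑_y max_x P(x,y) < 1`.  With `γ* = ∑_y max_x P(x,y) = 1 - P_e` and
`Q*_Y(y) = max_x P(x,y) / γ*`, one has
`Pr[P_{X,Y}(X,Y)/Q*_Y(Y) ≤ γ*] - γ* = P_e`, where the probability is that of the set
`{(x,y) : P(x,y) ≤ γ* · Q*_Y(y)}` under `P`. -/
theorem stmt_6 {𝒳 𝒴 : Type*} [Fintype 𝒳] [Fintype 𝒴] [Nonempty 𝒳]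
    (P : 𝒳 → 𝒴 → ℝ) (hP : ∀ x y, 0 ≤ P x y)
    (hsum : ∑ x, ∑ y, P x y = 1)
    (hPe : 1 - ∑ y, Finset.univ.sup' Finset.univ_nonempty (fun x => P x y) < 1)
    (γ : ℝ) (hγ : γ = ∑ y, Finset.univ.sup' Finset.univ_nonempty (fun x => P x y))
    (Q : 𝒴 → ℝ)
    (hQ : ∀ y, Q y = (Finset.univ.sup' Finset.univ_nonempty (fun x => P x y)) / γ) :
    (∑ q ∈ Finset.univ.filter (fun q : 𝒳 × 𝒴 => P q.1 q.2 ≤ γ * Q q.2), P q.1 q.2) - γ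
      = 1 - ∑ y, Finset.univ.sup' Finset.univ_nonempty (fun x => P x y) := by
  have hγpos : 0 < γ := by linarith [hPe, hγ.symm.le, hγ.ge]
  have hfilter : Finset.univ.filter (fun q : 𝒳 × 𝒴 => P q.1 q.2 ≤ γ * Q q.2)
      = Finset.univ := by
    apply Finset.filter_true_of_mem
    intro q _
    rw [hQ, mul_div_cancel₀ _ (ne_of_gt hγpos)]
    exact Finset.le_sup' (fun x => P x q.2) (Finset.mem_univ q.1)
  rw [hfilter, ← hγ]
  have : (∑ q : 𝒳 × 𝒴, P q.1 q.2) = 1 := by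
    rw [Fintype.sum_prod_type]; exact hsum
  rw [this]
end

section
/- Let X and Y be random variables on finite alphabets 𝒳 and 𝒴 with joint distribution P_{X,Y}. For every distribution Q_Y on 𝒴 and every γ ≥ 0, the minimum probability of error satisfies P_e ≥ Pr[ P_{X,Y}(X,Y)/Q_Y(Y) ≤ γ ] − γ. -/
open scoped Classical BigOperators

/-- **Generalized Verdú–Han lower bound.**
`X`, `Y` are random variables on finite alphabets with joint distribution `P`.
For every distribution `Q` on `𝒴` and every `γ ≥ 0`, the minimum probability of error
`P_e = 1 - ∑_y max_x P(x,y)` satisfies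
`P_e ≥ Pr[P_{X,Y}(X,Y)/Q(Y) ≤ γ] - γ`, where the probability is that of the set
`{(x,y) : P(x,y) ≤ γ · Q(y)}` under `P`. -/
theorem stmt_7 {𝒳 𝒴 : Type*} [Fintype 𝒳] [Fintype 𝒴] [Nonempty 𝒳]
    (P : 𝒳 → 𝒴 → ℝ) (hP : ∀ x y, 0 ≤ P x y)
    (hsum : ∑ x, ∑ y, P x y = 1)
    (Q : 𝒴 → ℝ) (hQ0 : ∀ y, 0 ≤ Q y) (hQ1 : ∑ y, Q y = 1)
    (γ : ℝ) (hγ : 0 ≤ γ) :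
    1 - ∑ y, Finset.univ.sup' Finset.univ_nonempty (fun x => P x y) ≥
      (∑ q ∈ Finset.univ.filter (fun q : 𝒳 × 𝒴 => P q.1 q.2 ≤ γ * Q q.2), P q.1 q.2) - γ := by
  set M : 𝒴 → ℝ := fun y => Finset.univ.sup' Finset.univ_nonempty (fun x => P x y) with hM
  have key : ∀ y, (∑ x, if P x y ≤ γ * Q y then P x y else 0) ≤
      (∑ x, P x y) - M y + γ * Q y := by
    intro y
    obtain ⟨x₀, hx₀mem, hx₀⟩ := Finset.exists_mem_eq_sup' Finset.univ_nonempty (fun x => P x y)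
    by_cases hc : P x₀ y ≤ γ * Q y
    · have h1 : (∑ x, if P x y ≤ γ * Q y then P x y else 0) ≤ ∑ x, P x y := by
        apply Finset.sum_le_sum
        intro i _
        split_ifs <;> simp [hP]
      have h2 : M y ≤ γ * Q y := by rw [hM]; simpa [hx₀] using hc
      linarith
    · have heq : M y = P x₀ y := hx₀
      have h1 : (∑ x, if P x y ≤ γ * Q y then P x y else 0) ≤
          ∑ x ∈ Finset.univ.erase x₀, P x y := by
        rw [← Finset.sum_erase (f := fun x => if P x y ≤ γ * Q y then P x y else 0)
          Finset.univ (a := x₀) (by simp [hc])]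
        apply Finset.sum_le_sum
        intro i _
        split_ifs <;> simp [hP]
      have h2 : ∑ x ∈ Finset.univ.erase x₀, P x y = (∑ x, P x y) - M y := by
        have := Finset.sum_erase_add Finset.univ (fun x => P x y) hx₀mem
        linarith
      have h3 : 0 ≤ γ * Q y := mul_nonneg hγ (hQ0 y)
      linarith
  have hfil : (∑ q ∈ Finset.univ.filter (fun q : 𝒳 × 𝒴 => P q.1 q.2 ≤ γ * Q q.2), P q.1 q.2)
      = ∑ y, ∑ x, if P x y ≤ γ * Q y then P x y else 0 := by
    rw [Finset.sum_filter, Fintype.sum_prod_type, Finset.sum_comm]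
  have hsum' : ∑ y, ∑ x, P x y = 1 := by rw [Finset.sum_comm]; exact hsum
  have := Finset.sum_le_sum (fun y (_ : y ∈ Finset.univ) => key y)
  rw [Finset.sum_add_distrib, Finset.sum_sub_distrib, hsum', ← Finset.mul_sum, hQ1,
    mul_one] at this
  rw [ge_iff_le, hfil]
  linarith
end

section
/- Consider the n-fold memoryless BSC with crossover probability p ∈ (0,1/2), a code 𝒞_n ⊆ {0,1}^n with |𝒞_n| ≥ 2, and X^n uniform on 𝒞_n. Let a_n be the minimum probability of decoding error, b_n = P_{X^n,Y^n}(NT(𝒞_n)) the probability of the strict-tie-breaking set, and δ_n = P_{X^n,Y^n}(T(𝒞_n)) the probability of the set of ties. Then b_n ≤ a_n ≤ b_n + δ_n. -/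
open scoped Classical BigOperators

/-- Joint distribution of input and output of the `n`-fold memoryless BSC with crossover
probability `p`, with input uniform over the code `C ⊆ {0,1}ⁿ`:
`P_{Xⁿ,Yⁿ}(x,y) = 1{x ∈ C} · |C|⁻¹ · p^{d(x,y)} (1-p)^{n - d(x,y)}`. -/
noncomputable def bscJoint (n : ℕ) (p : ℝ) (C : Finset (Fin n → Bool))
    (x y : Fin n → Bool) : ℝ :=
  (if x ∈ C then ((C.card : ℝ))⁻¹ else 0) *
    p ^ hammingDist x y * (1 - p) ^ (n - hammingDist x y)

/-- Minimum distance to `y` from codewords of `C` other than `x`: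
`min_{u∈C, u≠x} d(u,y)`. -/
noncomputable def dmin (n : ℕ) (C : Finset (Fin n → Bool)) (x y : Fin n → Bool) : ℕ :=
  sInf {d : ℕ | ∃ u ∈ C, u ≠ x ∧ d = hammingDist u y}

/-- Minimum probability of decoding error
`aₙ = 1 - ∑_y max_{x∈C} P_{Xⁿ}(x) Wⁿ(y|x)`. -/
noncomputable def aErr (n : ℕ) (p : ℝ) (C : Finset (Fin n → Bool)) (h : C.Nonempty) : ℝ :=
  1 - ∑ y : Fin n → Bool, C.sup' h fun x => bscJoint n p C x y

/-- `bₙ = P_{Xⁿ,Yⁿ}(NT(C))`, probability of the strict-tie-breaking set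
`NT(C) = {(x,y) ∈ C × {0,1}ⁿ : d(x,y) > min_{u∈C, u≠x} d(u,y)}`. -/
noncomputable def bNT (n : ℕ) (p : ℝ) (C : Finset (Fin n → Bool)) : ℝ :=
  ∑ q ∈ Finset.univ.filter (fun q : (Fin n → Bool) × (Fin n → Bool) =>
      q.1 ∈ C ∧ dmin n C q.1 q.2 < hammingDist q.1 q.2),
    bscJoint n p C q.1 q.2

/-- `δₙ = P_{Xⁿ,Yⁿ}(T(C))`, probability of the set of ties
`T(C) = {(x,y) ∈ C × {0,1}ⁿ : d(x,y) = min_{u∈C, u≠x} d(u,y)}`. -/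
noncomputable def deltaT (n : ℕ) (p : ℝ) (C : Finset (Fin n → Bool)) : ℝ :=
  ∑ q ∈ Finset.univ.filter (fun q : (Fin n → Bool) × (Fin n → Bool) =>
      q.1 ∈ C ∧ hammingDist q.1 q.2 = dmin n C q.1 q.2),
    bscJoint n p C q.1 q.2

private lemma aux_hd {n : ℕ} (x y : Fin n → Bool) : hammingDist x y ≤ n := by
  simpa using (hammingDist_le_card_fintype (x := x) (y := y))

private lemma aux_mono {p : ℝ} (hp0 : 0 ≤ p) (hp : p ≤ 1 - p) {n d1 d2 : ℕ}
    (h12 : d1 ≤ d2) (h2n : d2 ≤ n) :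
    p ^ d2 * (1 - p) ^ (n - d2) ≤ p ^ d1 * (1 - p) ^ (n - d1) := by
  have h1p : 0 ≤ 1 - p := hp0.trans hp
  calc p ^ d2 * (1 - p) ^ (n - d2)
      = p ^ d1 * (p ^ (d2 - d1) * (1 - p) ^ (n - d2)) := by
        rw [← mul_assoc, ← pow_add]; congr 2; omega
    _ ≤ p ^ d1 * ((1 - p) ^ (d2 - d1) * (1 - p) ^ (n - d2)) := by
        apply mul_le_mul_of_nonneg_left _ (pow_nonneg hp0 _)
        exact mul_le_mul_of_nonneg_right (pow_le_pow_left₀ hp0 hp _) (pow_nonneg h1p _)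
    _ = p ^ d1 * (1 - p) ^ (n - d1) := by rw [← pow_add]; congr 2; omega

private lemma aux_nonneg {n : ℕ} {p : ℝ} {C : Finset (Fin n → Bool)} (hp0 : 0 ≤ p)
    (hp1 : p ≤ 1) (x y : Fin n → Bool) : 0 ≤ bscJoint n p C x y := by
  unfold bscJoint
  have h1p : (0:ℝ) ≤ 1 - p := by linarith
  apply mul_nonneg (mul_nonneg _ (pow_nonneg hp0 _)) (pow_nonneg h1p _)
  split <;> positivity

private lemma aux_prod {n : ℕ} {p : ℝ} (x y : Fin n → Bool) :
    p ^ hammingDist x y * (1 - p) ^ (n - hammingDist x y)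
      = ∏ i : Fin n, (if x i = y i then (1 - p) else p) := by
  rw [Finset.prod_ite, Finset.prod_const, Finset.prod_const]
  have h1 : (Finset.univ.filter fun i => ¬ x i = y i).card = hammingDist x y := by
    simp [hammingDist]
  have h2 : (Finset.univ.filter fun i => x i = y i).card = n - hammingDist x y := by
    have h3 := Finset.card_filter_add_card_filter_not
      (s := (Finset.univ : Finset (Fin n))) (p := fun i => x i = y i)
    simp only [Finset.card_univ, Fintype.card_fin] at h3
    omega
  rw [h1, h2, mul_comm]

private lemma aux_sumW {n : ℕ} {p : ℝ} (x : Fin n → Bool) :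
    ∑ y : Fin n → Bool, p ^ hammingDist x y * (1 - p) ^ (n - hammingDist x y) = 1 := by
  simp_rw [aux_prod]
  rw [← Fintype.prod_sum (fun i (b : Bool) => if x i = b then (1 - p) else p)]
  apply Finset.prod_eq_one
  intro i _
  cases x i <;> simp <;> ring

private lemma aux_total {n : ℕ} {p : ℝ} {C : Finset (Fin n → Bool)} (hcard : C.card ≠ 0) :
    ∑ x : Fin n → Bool, ∑ y : Fin n → Bool, bscJoint n p C x y = 1 := by
  have h1 : ∀ x : Fin n → Bool, ∑ y : Fin n → Bool, bscJoint n p C x y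
      = (if x ∈ C then ((C.card : ℝ))⁻¹ else 0) := by
    intro x
    unfold bscJoint
    simp_rw [mul_assoc, ← Finset.mul_sum]
    rw [aux_sumW, mul_one]
  simp_rw [h1]
  rw [Finset.sum_ite_mem, Finset.univ_inter, Finset.sum_const, nsmul_eq_mul,
    mul_inv_cancel₀]
  exact Nat.cast_ne_zero.mpr hcard

/-- **Sandwich bound `bₙ ≤ aₙ ≤ bₙ + δₙ`** for the `n`-fold BSC with crossover
probability `p ∈ (0,1/2)`, a code `C` with `|C| ≥ 2` and uniform input on `C`. -/
theorem stmt_9 (n : ℕ) (p : ℝ) (hp0 : 0 < p) (hp2 : p < 1 / 2)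
    (C : Finset (Fin n → Bool)) (hC : 2 ≤ C.card) :
    bNT n p C ≤ aErr n p C (Finset.card_pos.mp (by omega)) ∧
      aErr n p C (Finset.card_pos.mp (by omega)) ≤ bNT n p C + deltaT n p C := by
  have hp0' : (0:ℝ) ≤ p := hp0.le
  have hp1 : p ≤ 1 := by linarith
  have hpq : p ≤ 1 - p := by linarith
  have hCne : C.Nonempty := Finset.card_pos.mp (by omega)
  have hf0 : ∀ x y : Fin n → Bool, 0 ≤ bscJoint n p C x y := aux_nonneg hp0' hp1
  have hfnot : ∀ x y : Fin n → Bool, x ∉ C → bscJoint n p C x y = 0 := by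
    intro x y hx; simp [bscJoint, hx]
  have hmono : ∀ y : Fin n → Bool, ∀ x ∈ C, ∀ x' ∈ C,
      hammingDist x' y ≤ hammingDist x y → bscJoint n p C x y ≤ bscJoint n p C x' y := by
    intro y x hx x' hx' hd
    simp only [bscJoint, if_pos hx, if_pos hx', mul_assoc]
    exact mul_le_mul_of_nonneg_left (aux_mono hp0' hpq hd (aux_hd x y)) (by positivity)
  have hdminS : ∀ x y : Fin n → Bool, ∃ u ∈ C, u ≠ x ∧ dmin n C x y = hammingDist u y := by
    intro x y
    have hS : {d : ℕ | ∃ u ∈ C, u ≠ x ∧ d = hammingDist u y}.Nonempty := by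
      obtain ⟨u, hu, hux⟩ := Finset.exists_mem_ne (show 1 < C.card by omega) x
      exact ⟨hammingDist u y, u, hu, hux, rfl⟩
    exact Nat.sInf_mem hS
  have hdmin_le : ∀ x y u : Fin n → Bool, u ∈ C → u ≠ x →
      dmin n C x y ≤ hammingDist u y := by
    intro x y u hu hux
    exact Nat.sInf_le ⟨u, hu, hux, rfl⟩
  have hM_ge : ∀ y : Fin n → Bool, ∀ x ∈ C,
      bscJoint n p C x y ≤ C.sup' hCne (fun x => bscJoint n p C x y) :=
    fun y x hx => Finset.le_sup' (fun x => bscJoint n p C x y) hx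
  have hM0 : ∀ y : Fin n → Bool, 0 ≤ C.sup' hCne (fun x => bscJoint n p C x y) := by
    intro y
    obtain ⟨x₀, hx₀⟩ := hCne
    exact (hf0 x₀ y).trans (hM_ge y x₀ hx₀)
  have htot : ∑ y : Fin n → Bool, ∑ x : Fin n → Bool, bscJoint n p C x y = 1 := by
    have hcard0 : C.card ≠ 0 := by omega
    have h := aux_total (n := n) (p := p) (C := C) hcard0
    rw [Finset.sum_comm]; exact h
  have haE : aErr n p C hCne = ∑ y : Fin n → Bool,
      ((∑ x : Fin n → Bool, bscJoint n p C x y)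
        - C.sup' hCne (fun x => bscJoint n p C x y)) := by
    rw [aErr, Finset.sum_sub_distrib, htot]
  have hb : bNT n p C = ∑ y : Fin n → Bool, ∑ x : Fin n → Bool,
      (if x ∈ C ∧ dmin n C x y < hammingDist x y then bscJoint n p C x y else 0) := by
    rw [bNT, Finset.sum_filter, Fintype.sum_prod_type, Finset.sum_comm]
  have hd : deltaT n p C = ∑ y : Fin n → Bool, ∑ x : Fin n → Bool,
      (if x ∈ C ∧ hammingDist x y = dmin n C x y then bscJoint n p C x y else 0) := by
    rw [deltaT, Finset.sum_filter, Fintype.sum_prod_type, Finset.sum_comm]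
  -- per-y minimizer facts
  have hmin : ∀ y : Fin n → Bool, ∃ xs ∈ C,
      (C.sup' hCne (fun x => bscJoint n p C x y) = bscJoint n p C xs y) ∧
      ¬ (dmin n C xs y < hammingDist xs y) := by
    intro y
    obtain ⟨xs, hxs, hxsmin⟩ := Finset.exists_min_image C (fun x => hammingDist x y) hCne
    refine ⟨xs, hxs, ?_, ?_⟩
    · exact le_antisymm
        (Finset.sup'_le _ _ fun x hx => hmono y x hx xs hxs (hxsmin x hx))
        (Finset.le_sup' (fun x => bscJoint n p C x y) hxs)
    · obtain ⟨u, hu, hux, hdu⟩ := hdminS xs y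
      rw [hdu]
      exact not_lt.mpr (hxsmin u hu)
  constructor
  · -- b ≤ a
    show bNT n p C ≤ aErr n p C hCne
    rw [haE, hb]
    apply Finset.sum_le_sum
    intro y _
    obtain ⟨xs, hxs, hMx, hxsnot⟩ := hmin y
    have hsplit : ∑ x : Fin n → Bool, bscJoint n p C x y
        = (∑ x : Fin n → Bool,
            (if x ∈ C ∧ dmin n C x y < hammingDist x y then bscJoint n p C x y else 0))
          + ∑ x : Fin n → Bool,
            (if x ∈ C ∧ dmin n C x y < hammingDist x y then 0 else bscJoint n p C x y) := by
      rw [← Finset.sum_add_distrib]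
      apply Finset.sum_congr rfl
      intros; split <;> ring
    have hMle : C.sup' hCne (fun x => bscJoint n p C x y)
        ≤ ∑ x : Fin n → Bool,
            (if x ∈ C ∧ dmin n C x y < hammingDist x y then 0 else bscJoint n p C x y) := by
      rw [hMx]
      have h1 := Finset.single_le_sum
        (f := fun x => if x ∈ C ∧ dmin n C x y < hammingDist x y then 0
          else bscJoint n p C x y)
        (fun x _ => by
          by_cases h : (x ∈ C ∧ dmin n C x y < hammingDist x y) <;> simp [h, hf0 x y])
        (Finset.mem_univ xs)
      simpa [hxs, hxsnot] using h1
    linarith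
  · -- a ≤ b + δ
    show aErr n p C hCne ≤ bNT n p C + deltaT n p C
    rw [haE, hb, hd, ← Finset.sum_add_distrib]
    apply Finset.sum_le_sum
    intro y _
    have hdecomp : ∑ x : Fin n → Bool, bscJoint n p C x y
        = (∑ x : Fin n → Bool,
            (if x ∈ C ∧ dmin n C x y < hammingDist x y then bscJoint n p C x y else 0))
          + (∑ x : Fin n → Bool,
            (if x ∈ C ∧ hammingDist x y = dmin n C x y then bscJoint n p C x y else 0))
          + ∑ x : Fin n → Bool,
            (if x ∈ C ∧ hammingDist x y < dmin n C x y then bscJoint n p C x y else 0) := by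
      rw [← Finset.sum_add_distrib, ← Finset.sum_add_distrib]
      apply Finset.sum_congr rfl
      intro x _
      by_cases hx : x ∈ C
      · simp only [hx, true_and]
        rcases Nat.lt_trichotomy (hammingDist x y) (dmin n C x y) with h | h | h
        · rw [if_neg (by omega), if_neg (by omega), if_pos h]; ring
        · rw [if_neg (by omega), if_pos h, if_neg (by omega)]; ring
        · rw [if_pos h, if_neg (by omega), if_neg (by omega)]; ring
      · simp [hx, hfnot x y hx]
    have h3 : ∑ x : Fin n → Bool,
        (if x ∈ C ∧ hammingDist x y < dmin n C x y then bscJoint n p C x y else 0)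
          ≤ C.sup' hCne (fun x => bscJoint n p C x y) := by
      by_cases hex : ∃ x0, x0 ∈ C ∧ hammingDist x0 y < dmin n C x0 y
      · obtain ⟨x0, hx0C, hx0⟩ := hex
        rw [Finset.sum_eq_single_of_mem x0 (Finset.mem_univ x0)]
        · rw [if_pos ⟨hx0C, hx0⟩]
          exact hM_ge y x0 hx0C
        · intro x _ hne
          rw [if_neg]
          rintro ⟨hxC, hxd⟩
          have h1 : dmin n C x y ≤ hammingDist x0 y :=
            hdmin_le x y x0 hx0C (Ne.symm hne)
          have h2 : dmin n C x0 y ≤ hammingDist x y :=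
            hdmin_le x0 y x hxC hne
          omega
      · push_neg at hex
        rw [Finset.sum_eq_zero]
        · exact hM0 y
        · intro x _
          by_cases hx : x ∈ C
          · exact if_neg (fun h => absurd h.2 (not_lt.mpr (hex x hx)))
          · exact if_neg (fun h => hx h.1)
    linarith
end

section
/- Consider the n-fold memoryless BSC with crossover probability p ∈ (0,1/2), input x ∈ {0,1}^n, and another word x' ∈ {0,1}^n. If d(x,x') = 2ℓ with ℓ ≥ 1, then Pr( d(x,Y^n) = d(x',Y^n) | X^n = x ) = C(2ℓ, ℓ) p^ℓ (1−p)^ℓ; if d(x,x') is odd, this probability is 0. -/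
open scoped Classical BigOperators
open Finset

/-- Transition probability of the `n`-fold memoryless BSC with crossover probability `p`:
`Wⁿ(y|x) = p^{d(x,y)} (1-p)^{n - d(x,y)}`. -/
noncomputable def bscW (n : ℕ) (p : ℝ) (x y : Fin n → Bool) : ℝ :=
  p ^ hammingDist x y * (1 - p) ^ (n - hammingDist x y)

section aux

variable {n : ℕ}

private lemma Tflip (x : Fin n → Bool) (U : Finset (Fin n)) :
    (univ.filter fun i => x i ≠ (if i ∈ U then !(x i) else x i)) = U := by
  ext i
  by_cases h : i ∈ U <;> simp [h]

private lemma Tprime (x x' y : Fin n → Bool) :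
    (univ.filter fun i => x' i ≠ y i)
      = ((univ.filter fun i => x i ≠ x' i) \ (univ.filter fun i => x i ≠ y i))
        ∪ ((univ.filter fun i => x i ≠ y i) \ (univ.filter fun i => x i ≠ x' i)) := by
  ext i
  simp only [mem_filter, mem_union, mem_sdiff, mem_univ, true_and]
  cases hx : x i <;> cases hx' : x' i <;> cases hy : y i <;> simp

private lemma dist_prime (x x' y : Fin n → Bool) :
    hammingDist x' y
      = ((univ.filter fun i => x i ≠ x' i).card
          - ((univ.filter fun i => x i ≠ x' i) ∩ (univ.filter fun i => x i ≠ y i)).card)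
        + ((univ.filter fun i => x i ≠ y i) \ (univ.filter fun i => x i ≠ x' i)).card := by
  show (univ.filter fun i => x' i ≠ y i).card = _
  rw [Tprime x x' y, card_union_of_disjoint disjoint_sdiff_sdiff]
  congr 1
  have := card_sdiff_add_card_inter (univ.filter fun i => x i ≠ x' i)
    (univ.filter fun i => x i ≠ y i)
  omega

private lemma dist_split (x x' y : Fin n → Bool) :
    hammingDist x y
      = ((univ.filter fun i => x i ≠ x' i) ∩ (univ.filter fun i => x i ≠ y i)).card
        + ((univ.filter fun i => x i ≠ y i) \ (univ.filter fun i => x i ≠ x' i)).card := by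
  show (univ.filter fun i => x i ≠ y i).card = _
  have := card_sdiff_add_card_inter (univ.filter fun i => x i ≠ y i)
    (univ.filter fun i => x i ≠ x' i)
  rw [inter_comm] at this
  omega

private lemma tie_even (z z' y : Fin n → Bool)
    (h : hammingDist z y = hammingDist z' y) : ¬ Odd (hammingDist z z') := by
  have h1 := dist_prime z z' y
  have h2 := dist_split z z' y
  have h3 : ((univ.filter fun i => z i ≠ z' i) ∩ (univ.filter fun i => z i ≠ y i)).card
      ≤ (univ.filter fun i => z i ≠ z' i).card := card_le_card inter_subset_left
  have hzz : hammingDist z z' = (univ.filter fun i => z i ≠ z' i).card := rfl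
  intro hodd
  obtain ⟨k, hk⟩ := hodd
  omega

end aux

/-- **Probability of a tie between two words over the BSC.**
For the `n`-fold BSC with crossover probability `p ∈ (0,1/2)` and input `x`:
if `d(x,x') = 2ℓ` with `ℓ ≥ 1`, then
`Pr(d(x,Yⁿ) = d(x',Yⁿ) | Xⁿ = x) = C(2ℓ,ℓ) pˡ (1-p)ˡ`; and whenever the distance
between two words is odd, the corresponding probability is `0`. -/
theorem stmt_11 (n : ℕ) (p : ℝ) (hp0 : 0 < p) (hp2 : p < 1 / 2)
    (x x' : Fin n → Bool) (ℓ : ℕ) (hℓ : 1 ≤ ℓ)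
    (hd : hammingDist x x' = 2 * ℓ) :
    (∑ y ∈ Finset.univ.filter (fun y : Fin n → Bool =>
        hammingDist x y = hammingDist x' y), bscW n p x y)
      = (Nat.choose (2 * ℓ) ℓ : ℝ) * p ^ ℓ * (1 - p) ^ ℓ ∧
    ∀ z z' : Fin n → Bool, Odd (hammingDist z z') →
      (∑ y ∈ Finset.univ.filter (fun y : Fin n → Bool =>
          hammingDist z y = hammingDist z' y), bscW n p z y) = 0 := by
  classical
  constructor
  · -- main computation
    set s : Finset (Fin n) := univ.filter (fun i => x i ≠ x' i) with hs
    have hscard : s.card = 2 * ℓ := hd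
    have hsn : s.card ≤ n := by
      simpa using card_le_card (subset_univ s)
    set m : ℕ := n - 2 * ℓ with hm
    have hucard : (univ \ s).card = m := by
      rw [card_sdiff_of_subset (subset_univ s)]
      simp [hscard, hm]
    -- the disagreement set of y relative to x
    set T : (Fin n → Bool) → Finset (Fin n) :=
      fun y => univ.filter (fun i => x i ≠ y i) with hT
    -- reindex the sum by pairs (A, B), A = T y ∩ s, B = T y \ s
    rw [Finset.sum_nbij' (i := fun y => (T y ∩ s, T y \ s))
      (j := fun q => fun i => if i ∈ q.1 ∪ q.2 then !(x i) else x i)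
      (t := (s.powersetCard ℓ) ×ˢ ((univ \ s).powerset))
      (g := fun q => p ^ (ℓ + q.2.card) * (1 - p) ^ (n - (ℓ + q.2.card)))]
    · -- compute the reindexed sum
      rw [Finset.sum_product]
      have hinner : ∀ A ∈ s.powersetCard ℓ,
          (∑ B ∈ (univ \ s).powerset, p ^ (ℓ + B.card) * (1 - p) ^ (n - (ℓ + B.card)))
            = p ^ ℓ * (1 - p) ^ ℓ := by
        intro A _
        have key : (∑ B ∈ (univ \ s).powerset, p ^ B.card * (1 - p) ^ (m - B.card)) = 1 := by
          have hpr := Finset.prod_add (fun _ : Fin n => p) (fun _ : Fin n => 1 - p) (univ \ s)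
          simp only [prod_const, add_sub_cancel, one_pow] at hpr
          have hcg : ∀ B ∈ (univ \ s).powerset,
              p ^ B.card * (1 - p) ^ (m - B.card)
                = p ^ B.card * (1 - p) ^ ((univ \ s) \ B).card := by
            intro B hB
            rw [mem_powerset] at hB
            rw [card_sdiff_of_subset hB, hucard]
          rw [Finset.sum_congr rfl hcg]
          exact hpr.symm
        calc (∑ B ∈ (univ \ s).powerset, p ^ (ℓ + B.card) * (1 - p) ^ (n - (ℓ + B.card)))
            = ∑ B ∈ (univ \ s).powerset,
              (p ^ ℓ * (1 - p) ^ ℓ) * (p ^ B.card * (1 - p) ^ (m - B.card)) := by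
              apply Finset.sum_congr rfl
              intro B hB
              rw [mem_powerset] at hB
              have hBle : B.card ≤ m := by
                rw [← hucard]; exact card_le_card hB
              have hexp : n - (ℓ + B.card) = ℓ + (m - B.card) := by omega
              rw [hexp, pow_add, pow_add]
              ring
          _ = p ^ ℓ * (1 - p) ^ ℓ := by
              rw [← Finset.mul_sum, key, mul_one]
      rw [Finset.sum_congr rfl hinner, Finset.sum_const, card_powersetCard, hscard,
        nsmul_eq_mul, mul_assoc]
    · -- i maps into the target
      intro y hy
      rw [mem_filter] at hy
      have hTy : T y = univ.filter (fun i => x i ≠ y i) := rfl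
      have h1 := dist_prime x x' y
      have h2 := dist_split x x' y
      rw [← hs, ← hTy] at h1 h2
      have h3 : (s ∩ T y).card ≤ s.card := card_le_card inter_subset_left
      have hAcard : (T y ∩ s).card = ℓ := by
        rw [inter_comm]
        omega
      rw [mem_product, mem_powersetCard, mem_powerset]
      exact ⟨⟨inter_subset_right, hAcard⟩, sdiff_subset_sdiff (subset_univ _) (le_refl s)⟩
    · -- j maps into the source
      rintro ⟨A, B⟩ hq
      rw [mem_product, mem_powersetCard, mem_powerset] at hq
      obtain ⟨⟨hAs, hAcard⟩, hB⟩ := hq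
      have hBs : Disjoint B s := by
        exact disjoint_of_subset_left hB sdiff_disjoint
      have hAB : Disjoint A B := by
        exact Disjoint.symm (disjoint_of_subset_right hAs hBs)
      have hTj : T (fun i => if i ∈ A ∪ B then !(x i) else x i) = A ∪ B := Tflip x (A ∪ B)
      rw [mem_filter]
      refine ⟨mem_univ _, ?_⟩
      have hdx : hammingDist x (fun i => if i ∈ A ∪ B then !(x i) else x i)
          = (A ∪ B).card := by
        show (T _).card = _
        rw [hTj]
      have hdx' := dist_prime x x' (fun i => if i ∈ A ∪ B then !(x i) else x i)
      rw [← hs, show (univ.filter fun i =>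
          x i ≠ (fun i => if i ∈ A ∪ B then !(x i) else x i) i) = A ∪ B from Tflip x (A ∪ B)]
        at hdx'
      have e1 : s ∩ (A ∪ B) = A := by
        rw [inter_union_distrib_left, (inter_eq_right).mpr hAs, inter_comm s B,
          disjoint_iff_inter_eq_empty.mp hBs, union_empty]
      have e2 : (A ∪ B) \ s = B := by
        rw [union_sdiff_distrib, sdiff_eq_empty_iff_subset.mpr hAs,
          sdiff_eq_self_of_disjoint hBs, empty_union]
      rw [hdx, hdx', e1, e2, card_union_of_disjoint hAB, hAcard, hscard]
      omega
    · -- left inverse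
      intro y hy
      funext i
      have : i ∈ (T y ∩ s) ∪ (T y \ s) ↔ x i ≠ y i := by
        simp only [mem_union, mem_inter, mem_sdiff, hT, mem_filter, mem_univ, true_and]
        tauto
      by_cases h : x i ≠ y i
      · simp only [this.mpr h, if_pos]
        revert h
        cases x i <;> cases y i <;> simp
      · have : i ∉ (T y ∩ s) ∪ (T y \ s) := fun hmem => h (this.mp hmem)
        simp only [this, if_neg, not_false_iff]
        revert h
        cases x i <;> cases y i <;> simp
    · -- right inverse
      rintro ⟨A, B⟩ hq
      rw [mem_product, mem_powersetCard, mem_powerset] at hq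
      obtain ⟨⟨hAs, _⟩, hB⟩ := hq
      have hBs : Disjoint B s := disjoint_of_subset_left hB sdiff_disjoint
      have hTj : T (fun i => if i ∈ A ∪ B then !(x i) else x i) = A ∪ B := Tflip x (A ∪ B)
      have e1 : (A ∪ B) ∩ s = A := by
        rw [union_inter_distrib_right, (inter_eq_left).mpr hAs,
          disjoint_iff_inter_eq_empty.mp hBs, union_empty]
      have e2 : (A ∪ B) \ s = B := by
        rw [union_sdiff_distrib, sdiff_eq_empty_iff_subset.mpr hAs,
          sdiff_eq_self_of_disjoint hBs, empty_union]
      simp only [hTj, e1, e2]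
    · -- values agree
      intro y hy
      rw [mem_filter] at hy
      obtain ⟨-, hy2⟩ := hy
      have hTy : T y = univ.filter (fun i => x i ≠ y i) := rfl
      have h1 := dist_prime x x' y
      have h2 := dist_split x x' y
      rw [← hs, ← hTy] at h1 h2
      have h3 : (s ∩ T y).card ≤ s.card := card_le_card inter_subset_left
      have hdxy : hammingDist x y = ℓ + (T y \ s).card := by
        omega
      show p ^ hammingDist x y * (1 - p) ^ (n - hammingDist x y) = _
      rw [hdxy]
  · -- odd distance ⇒ empty filter ⇒ zero
    intro z z' hodd
    rw [Finset.filter_false_of_mem, Finset.sum_empty]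
    intro y _
    intro h
    exact tie_even z z' y h hodd
end

section
/- Let x, x' ∈ {0,1}^n with d(x,x') = 2ℓ for some ℓ ≥ 1, and let 0 ≤ m ≤ n − 2ℓ. Then the number of y ∈ {0,1}^n satisfying d(x,y) = ℓ + 1 + m and d(x,y) > d(x',y) equals Σ_{ℓ'=0}^{min{m, ℓ−1}} C(2ℓ, ℓ+ℓ'+1)·C(n−2ℓ, m−ℓ'). -/
open scoped Classical BigOperators

open Finset

private lemma count_ab (n a b : ℕ) (x : Fin n → Bool) (D : Finset (Fin n)) :
    (univ.filter (fun y : Fin n → Bool =>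
        (D.filter (fun i => y i ≠ x i)).card = a ∧
        (Dᶜ.filter (fun i => y i ≠ x i)).card = b)).card
      = D.card.choose a * Dᶜ.card.choose b := by
  rw [← Finset.card_powersetCard, ← Finset.card_powersetCard, ← Finset.card_product]
  refine Finset.card_bij'
    (fun y _ => (D.filter (fun i => y i ≠ x i), Dᶜ.filter (fun i => y i ≠ x i)))
    (fun p _ => fun i => if i ∈ p.1 ∪ p.2 then !x i else x i) ?_ ?_ ?_ ?_
  · intro y hy
    simp only [mem_filter, mem_univ, true_and] at hy
    simp [Finset.mem_product, Finset.mem_powersetCard, Finset.filter_subset, hy.1, hy.2]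
  · intro p hp
    simp only [Finset.mem_product, Finset.mem_powersetCard] at hp
    obtain ⟨⟨hS, hSc⟩, hT, hTc⟩ := hp
    simp only [mem_filter, mem_univ, true_and]
    have key : ∀ s : Finset (Fin n),
        s.filter (fun i => (if i ∈ p.1 ∪ p.2 then !x i else x i) ≠ x i)
          = s.filter (fun i => i ∈ p.1 ∪ p.2) := by
      intro s
      apply Finset.filter_congr
      intro i _
      by_cases h : i ∈ p.1 ∪ p.2 <;> simp [h]
    rw [key, key]
    constructor
    · have : D.filter (fun i => i ∈ p.1 ∪ p.2) = p.1 := by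
        ext i
        simp only [mem_filter, Finset.mem_union]
        constructor
        · rintro ⟨hiD, hi | hi⟩
          · exact hi
          · exact absurd hiD (by simpa using hT hi)
        · intro hi; exact ⟨hS hi, Or.inl hi⟩
      rw [this, hSc]
    · have : Dᶜ.filter (fun i => i ∈ p.1 ∪ p.2) = p.2 := by
        ext i
        simp only [mem_filter, Finset.mem_union, Finset.mem_compl]
        constructor
        · rintro ⟨hiD, hi | hi⟩
          · exact absurd (hS hi) hiD
          · exact hi
        · intro hi; exact ⟨by simpa using hT hi, Or.inr hi⟩
      rw [this, hTc]
  · intro y _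
    funext i
    beta_reduce
    by_cases h : y i ≠ x i
    · have : i ∈ D.filter (fun i => y i ≠ x i) ∪ Dᶜ.filter (fun i => y i ≠ x i) := by
        by_cases hiD : i ∈ D <;> simp [hiD, h]
      rw [if_pos this]
      revert h; cases y i <;> cases x i <;> simp
    · have : i ∉ D.filter (fun i => y i ≠ x i) ∪ Dᶜ.filter (fun i => y i ≠ x i) := by
        simp [h]
      rw [if_neg this]
      push_neg at h; exact h.symm
  · intro p hp
    simp only [Finset.mem_product, Finset.mem_powersetCard] at hp
    obtain ⟨⟨hS, _⟩, hT, _⟩ := hp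
    have key : ∀ s : Finset (Fin n),
        s.filter (fun i => (if i ∈ p.1 ∪ p.2 then !x i else x i) ≠ x i)
          = s.filter (fun i => i ∈ p.1 ∪ p.2) := by
      intro s
      apply Finset.filter_congr
      intro i _
      by_cases h : i ∈ p.1 ∪ p.2 <;> simp [h]
    have h1 : D.filter (fun i => i ∈ p.1 ∪ p.2) = p.1 := by
      ext i
      simp only [mem_filter, Finset.mem_union]
      constructor
      · rintro ⟨hiD, hi | hi⟩
        · exact hi
        · exact absurd hiD (by simpa using hT hi)
      · intro hi; exact ⟨hS hi, Or.inl hi⟩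
    have h2 : Dᶜ.filter (fun i => i ∈ p.1 ∪ p.2) = p.2 := by
      ext i
      simp only [mem_filter, Finset.mem_union, Finset.mem_compl]
      constructor
      · rintro ⟨hiD, hi | hi⟩
        · exact absurd (hS hi) hiD
        · exact hi
      · intro hi; exact ⟨by simpa using hT hi, Or.inr hi⟩
    beta_reduce
    rw [key, key, h1, h2]

/-- **Counting words strictly closer to `x'` (even-distance case).**
If `x, x' ∈ {0,1}ⁿ` have Hamming distance `d(x,x') = 2ℓ` with `ℓ ≥ 1`, then for every
`0 ≤ m ≤ n - 2ℓ` the number of `y ∈ {0,1}ⁿ` with `d(x,y) = ℓ + 1 + m` and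
`d(x,y) > d(x',y)` equals
`∑_{ℓ'=0}^{min(m,ℓ-1)} C(2ℓ, ℓ+ℓ'+1)·C(n-2ℓ, m-ℓ')`. -/
theorem stmt_12 (n ℓ m : ℕ) (hℓ : 1 ≤ ℓ)
    (x x' : Fin n → Bool) (hd : hammingDist x x' = 2 * ℓ)
    (hm : m ≤ n - 2 * ℓ) :
    (Finset.univ.filter (fun y : Fin n → Bool =>
        hammingDist x y = ℓ + 1 + m ∧ hammingDist x' y < hammingDist x y)).card
      = ∑ ℓ' ∈ Finset.range (min m (ℓ - 1) + 1),
          Nat.choose (2 * ℓ) (ℓ + ℓ' + 1) * Nat.choose (n - 2 * ℓ) (m - ℓ') := by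
  classical
  set D : Finset (Fin n) := univ.filter (fun i => x i ≠ x' i) with hDdef
  have hD : D.card = 2 * ℓ := hd
  have hDc : Dᶜ.card = n - 2 * ℓ := by
    rw [Finset.card_compl, hD]; simp
  have hAsub : ∀ y : Fin n → Bool, (D.filter (fun i => y i ≠ x i)).card ≤ 2 * ℓ :=
    fun y => hD ▸ Finset.card_le_card (filter_subset _ _)
  have hxy : ∀ y, hammingDist x y
      = (D.filter (fun i => y i ≠ x i)).card + (Dᶜ.filter (fun i => y i ≠ x i)).card := by
    intro y
    have h0 : hammingDist x y = (univ.filter (fun i => y i ≠ x i)).card := by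
      unfold hammingDist
      congr 1
      apply Finset.filter_congr
      intro i _
      exact ne_comm
    rw [h0, ← Finset.union_compl D, Finset.filter_union,
      Finset.card_union_of_disjoint (Finset.disjoint_filter_filter disjoint_compl_right)]
  have hx'y : ∀ y, hammingDist x' y
      = (2 * ℓ - (D.filter (fun i => y i ≠ x i)).card)
        + (Dᶜ.filter (fun i => y i ≠ x i)).card := by
    intro y
    have h0 : hammingDist x' y = (univ.filter (fun i => y i ≠ x' i)).card := by
      unfold hammingDist
      congr 1
      apply Finset.filter_congr
      intro i _
      exact ne_comm
    rw [h0, ← Finset.union_compl D, Finset.filter_union,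
      Finset.card_union_of_disjoint (Finset.disjoint_filter_filter disjoint_compl_right)]
    have h1 : D.filter (fun i => y i ≠ x' i) = D.filter (fun i => ¬ (y i ≠ x i)) := by
      apply Finset.filter_congr
      intro i hi
      have hxi : x i ≠ x' i := by simpa [hDdef] using hi
      revert hxi; cases x i <;> cases x' i <;> cases y i <;> simp
    have h2 : Dᶜ.filter (fun i => y i ≠ x' i) = Dᶜ.filter (fun i => y i ≠ x i) := by
      apply Finset.filter_congr
      intro i hi
      have hxi : x i = x' i := by
        simp only [hDdef, Finset.mem_compl, mem_filter, mem_univ, true_and, not_not] at hi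
        exact hi
      rw [hxi]
    rw [h1, h2, Finset.filter_not, Finset.card_sdiff_of_subset (filter_subset _ _), hD]
  have hsplit : (Finset.univ.filter (fun y : Fin n → Bool =>
        hammingDist x y = ℓ + 1 + m ∧ hammingDist x' y < hammingDist x y))
      = (Finset.range (min m (ℓ - 1) + 1)).biUnion (fun k =>
          univ.filter (fun y : Fin n → Bool =>
            (D.filter (fun i => y i ≠ x i)).card = ℓ + 1 + k ∧
            (Dᶜ.filter (fun i => y i ≠ x i)).card = m - k)) := by
    ext y
    simp only [Finset.mem_biUnion, mem_filter, mem_univ, true_and, Finset.mem_range]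
    rw [hxy y, hx'y y]
    have hab := hAsub y
    constructor
    · rintro ⟨h1, h2⟩
      exact ⟨(D.filter (fun i => y i ≠ x i)).card - (ℓ + 1), by omega, by omega, by omega⟩
    · rintro ⟨k, hk, ha, hb⟩
      constructor <;> omega
  rw [hsplit, Finset.card_biUnion]
  · apply Finset.sum_congr rfl
    intro k hk
    rw [count_ab n (ℓ + 1 + k) (m - k) x D, hD, hDc]
    congr 2
    omega
  · intro k₁ _ k₂ _ hne
    rw [Function.onFun, Finset.disjoint_left]
    intro y hy1 hy2
    simp only [mem_filter] at hy1 hy2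
    omega
end

section
/- Consider the n-fold memoryless BSC with crossover probability p ∈ (0,1/2) and distinct words x, x' ∈ {0,1}^n. Then Pr( d(x,Y^n) > d(x',Y^n) | X^n = x ) ≥ (p / (2(1−p))) · Pr( d(x,Y^n) = d(x',Y^n) | X^n = x ). -/
open scoped Classical BigOperators

namespace BSCaux

variable {n : ℕ}

noncomputable def flip (y : Fin n → Bool) (i : Fin n) : Fin n → Bool :=
  Function.update y i (!(y i))

lemma flip_apply_same (y : Fin n → Bool) (i : Fin n) : flip y i i = !(y i) := by
  simp [flip]

lemma flip_apply_ne (y : Fin n → Bool) {i j : Fin n} (h : j ≠ i) : flip y i j = y j := by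
  simp [flip, Function.update_of_ne h]

lemma flip_flip (y : Fin n → Bool) (i : Fin n) : flip (flip y i) i = y := by
  funext j
  by_cases h : j = i
  · subst h; simp [flip]
  · simp [flip, Function.update_of_ne h]

lemma hammingDist_flip_of_eq (z w : Fin n → Bool) (i : Fin n) (h : z i = w i) :
    hammingDist z (flip w i) = hammingDist z w + 1 := by
  classical
  have hset : (Finset.univ.filter fun j => z j ≠ flip w i j)
      = insert i (Finset.univ.filter fun j => z j ≠ w j) := by
    ext j
    by_cases hj : j = i
    · subst hj
      simp [flip_apply_same, h]
    · simp [flip_apply_ne w hj, hj]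
  have hnot : i ∉ (Finset.univ.filter fun j => z j ≠ w j) := by
    simp [h]
  unfold hammingDist
  rw [show ({j | z j ≠ flip w i j} : Finset (Fin n)) = Finset.univ.filter fun j => z j ≠ flip w i j from rfl]
  rw [hset, Finset.card_insert_of_notMem hnot]

lemma card_filter_split (P Q : Fin n → Prop) :
    (Finset.univ.filter P).card
      = (Finset.univ.filter fun j => P j ∧ Q j).card
        + (Finset.univ.filter fun j => P j ∧ ¬Q j).card := by
  classical
  rw [← Finset.card_filter_add_card_filter_not (s := Finset.univ.filter P) (p := Q),
    Finset.filter_filter, Finset.filter_filter]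

lemma bscW_nonneg {p : ℝ} (hp0 : 0 < p) (hp1 : p < 1) (x y : Fin n → Bool) :
    0 ≤ bscW n p x y := by
  unfold bscW
  exact mul_nonneg (pow_nonneg hp0.le _) (pow_nonneg (by linarith) _)

lemma bscW_succ {p : ℝ} (x y y' : Fin n → Bool)
    (h : hammingDist x y' = hammingDist x y + 1) :
    (1 - p) * bscW n p x y' = p * bscW n p x y := by
  have hle : hammingDist x y + 1 ≤ n := by
    have := hammingDist_le_card_fintype (x := x) (y := y')
    simpa [h, Fintype.card_fin] using this
  have h2 : n - hammingDist x y = (n - (hammingDist x y + 1)) + 1 := by omega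
  unfold bscW
  rw [h, h2, pow_succ, pow_succ]
  ring

lemma bool_iff1 (a b c : Bool) : ((b ≠ c) ∧ a ≠ b) ↔ ((a ≠ b) ∧ c = a) := by
  cases a <;> cases b <;> cases c <;> simp

lemma bool_iff2 (a b c : Bool) : ((b ≠ c) ∧ ¬(a ≠ b)) ↔ ((a ≠ c) ∧ ¬(a ≠ b)) := by
  cases a <;> cases b <;> cases c <;> simp

lemma bool_iff0 (a b c : Bool) : ((a ≠ c) ∧ a ≠ b) ↔ ((a ≠ b) ∧ ¬(c = a)) := by
  cases a <;> cases b <;> cases c <;> simp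

end BSCaux

/-- **Strict-inequality probability dominates tie probability up to `p/(2(1-p))`.**
For the `n`-fold BSC with crossover probability `p ∈ (0,1/2)` and distinct words
`x ≠ x'`:
`Pr(d(x,Yⁿ) > d(x',Yⁿ) | Xⁿ = x) ≥ (p/(2(1-p))) · Pr(d(x,Yⁿ) = d(x',Yⁿ) | Xⁿ = x)`. -/
theorem stmt_14 (n : ℕ) (p : ℝ) (hp0 : 0 < p) (hp2 : p < 1 / 2)
    (x x' : Fin n → Bool) (hxx : x ≠ x') :
    (∑ y ∈ Finset.univ.filter (fun y : Fin n → Bool =>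
        hammingDist x' y < hammingDist x y), bscW n p x y)
      ≥ (p / (2 * (1 - p))) *
        ∑ y ∈ Finset.univ.filter (fun y : Fin n → Bool =>
          hammingDist x y = hammingDist x' y), bscW n p x y := by
  classical
  have hp1 : p < 1 := by linarith
  have h1p : 0 < 1 - p := by linarith
  set T : Finset (Fin n → Bool) :=
    Finset.univ.filter (fun y => hammingDist x y = hammingDist x' y) with hT
  set S : Finset (Fin n → Bool) :=
    Finset.univ.filter (fun y => hammingDist x' y < hammingDist x y) with hS
  have hSnonneg : 0 ≤ ∑ y ∈ S, bscW n p x y :=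
    Finset.sum_nonneg fun y _ => BSCaux.bscW_nonneg hp0 hp1 x y
  rcases Finset.eq_empty_or_nonempty T with hTe | ⟨y₀, hy₀T⟩
  · rw [hTe]
    simpa using hSnonneg
  -- disagreement set and agreement/disagreement counters
  set A : (Fin n → Bool) → Finset (Fin n) :=
    fun y => Finset.univ.filter fun i => (x i ≠ x' i) ∧ y i = x i with hA
  set B : (Fin n → Bool) → Finset (Fin n) :=
    fun y => Finset.univ.filter fun i => (x i ≠ x' i) ∧ ¬(y i = x i) with hB
  set E : (Fin n → Bool) → Finset (Fin n) :=
    fun y => Finset.univ.filter fun j => (x j ≠ y j) ∧ ¬(x j ≠ x' j) with hE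
  have hdx : ∀ y, hammingDist x y = (B y).card + (E y).card := by
    intro y
    have h := (Finset.card_filter_add_card_filter_not
      (s := Finset.univ.filter fun j => x j ≠ y j) (p := fun j => x j ≠ x' j)).symm
    rw [Finset.filter_filter, Finset.filter_filter] at h
    have h1 : (Finset.univ.filter fun j => (x j ≠ y j) ∧ x j ≠ x' j) = B y := by
      apply Finset.filter_congr
      intro j _
      exact BSCaux.bool_iff0 (x j) (x' j) (y j)
    have h2 : (Finset.univ.filter fun j => (x j ≠ y j) ∧ ¬(x j ≠ x' j)) = E y := rfl
    rw [h1, h2] at h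
    exact h
  have hdx' : ∀ y, hammingDist x' y = (A y).card + (E y).card := by
    intro y
    have h := (Finset.card_filter_add_card_filter_not
      (s := Finset.univ.filter fun j => x' j ≠ y j) (p := fun j => x j ≠ x' j)).symm
    rw [Finset.filter_filter, Finset.filter_filter] at h
    have h1 : (Finset.univ.filter fun j => (x' j ≠ y j) ∧ x j ≠ x' j) = A y := by
      apply Finset.filter_congr
      intro j _
      exact BSCaux.bool_iff1 (x j) (x' j) (y j)
    have h2 : (Finset.univ.filter fun j => (x' j ≠ y j) ∧ ¬(x j ≠ x' j)) = E y := by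
      apply Finset.filter_congr
      intro j _
      exact BSCaux.bool_iff2 (x j) (x' j) (y j)
    rw [h1, h2] at h
    exact h
  have cardAB : ∀ y, (A y).card + (B y).card
      = (Finset.univ.filter fun i => x i ≠ x' i).card := by
    intro y
    have h := Finset.card_filter_add_card_filter_not
      (s := Finset.univ.filter fun i => x i ≠ x' i) (p := fun i => y i = x i)
    rw [Finset.filter_filter, Finset.filter_filter] at h
    exact h
  have hDpos : 0 < (Finset.univ.filter fun i => x i ≠ x' i).card := by
    have : 0 < hammingDist x x' := hammingDist_pos.mpr hxx
    simpa [hammingDist] using this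
  have hABeq : ∀ y ∈ T, (A y).card = (B y).card := by
    intro y hy
    have hty : hammingDist x y = hammingDist x' y := (Finset.mem_filter.mp hy).2
    have := hdx y
    have := hdx' y
    omega
  set k : ℕ := (A y₀).card with hk
  have hk1 : 1 ≤ k := by
    have h1 := hABeq y₀ hy₀T
    have h2 := cardAB y₀
    omega
  have hAcard : ∀ y ∈ T, (A y).card = k := by
    intro y hy
    have h1 := hABeq y hy
    have h2 := cardAB y
    have h3 := hABeq y₀ hy₀T
    have h4 := cardAB y₀
    omega
  have hBcard : ∀ y ∈ T, (B y).card = k := by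
    intro y hy
    have := hABeq y hy
    have := hAcard y hy
    omega
  -- key facts about flips
  have hiFacts : ∀ y, ∀ i ∈ A y, x i ≠ x' i ∧ y i = x i := by
    intro y i hi
    exact (Finset.mem_filter.mp hi).2
  have hdfx : ∀ y, ∀ i ∈ A y,
      hammingDist x (BSCaux.flip y i) = hammingDist x y + 1 := by
    intro y i hi
    exact BSCaux.hammingDist_flip_of_eq x y i (hiFacts y i hi).2.symm
  have hdfx' : ∀ y, ∀ i ∈ A y,
      hammingDist x' y = hammingDist x' (BSCaux.flip y i) + 1 := by
    intro y i hi
    obtain ⟨hne, heq⟩ := hiFacts y i hi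
    have hx'i : x' i = BSCaux.flip y i i := by
      rw [BSCaux.flip_apply_same]
      revert hne heq
      cases x i <;> cases x' i <;> cases y i <;> simp
    have h := BSCaux.hammingDist_flip_of_eq x' (BSCaux.flip y i) i hx'i
    rwa [BSCaux.flip_flip] at h
  have hstrict : ∀ y ∈ T, ∀ i ∈ A y, BSCaux.flip y i ∈ S := by
    intro y hy i hi
    have hty : hammingDist x y = hammingDist x' y := (Finset.mem_filter.mp hy).2
    have h1 := hdfx y i hi
    have h2 := hdfx' y i hi
    simp only [hS, Finset.mem_filter, Finset.mem_univ, true_and]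
    omega
  -- pair sum
  set P : Finset ((_ : Fin n → Bool) × Fin n) := T.sigma (fun y => A y) with hP
  set g : ((_ : Fin n → Bool) × Fin n) → (Fin n → Bool) :=
    fun z => BSCaux.flip z.1 z.2 with hg
  have hmaps : ∀ z ∈ P, g z ∈ S := by
    rintro ⟨y, i⟩ hz
    obtain ⟨hy, hi⟩ := Finset.mem_sigma.mp hz
    exact hstrict y hy i hi
  have step3 : ∑ y' ∈ S, ∑ z ∈ P.filter (fun z => g z = y'), bscW n p x (g z)
      = ∑ z ∈ P, bscW n p x (g z) :=
    Finset.sum_fiberwise_of_maps_to hmaps _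
  have step4 : ∀ y' ∈ S, ∑ z ∈ P.filter (fun z => g z = y'), bscW n p x (g z)
      = ((P.filter (fun z => g z = y')).card : ℝ) * bscW n p x y' := by
    intro y' _
    rw [Finset.sum_congr rfl (fun z hz => by rw [(Finset.mem_filter.mp hz).2]),
      Finset.sum_const, nsmul_eq_mul]
  have step5 : ∀ y' : Fin n → Bool, (P.filter (fun z => g z = y')).card ≤ k + 1 := by
    intro y'
    rcases Finset.eq_empty_or_nonempty (P.filter (fun z => g z = y')) with he | ⟨⟨y, i⟩, hz⟩
    · simp [he]
    obtain ⟨hzP, hzg⟩ := Finset.mem_filter.mp hz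
    obtain ⟨hyT, hiA⟩ := Finset.mem_sigma.mp hzP
    obtain ⟨hne, heq⟩ := hiFacts y i hiA
    have hBy' : B y' = insert i (B y) := by
      ext j
      by_cases hj : j = i
      · subst hj
        simp only [Finset.mem_insert, true_or, iff_true, hB, Finset.mem_filter,
          Finset.mem_univ, true_and]
        refine ⟨hne, ?_⟩
        rw [← hzg, hg]
        simp only [BSCaux.flip_apply_same]
        rw [heq]
        simp
      · have hyj : y' j = y j := by
          rw [← hzg, hg]
          exact BSCaux.flip_apply_ne y hj
        simp only [Finset.mem_insert, hj, false_or, hB, Finset.mem_filter,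
          Finset.mem_univ, true_and, hyj]
    have hinotB : i ∉ B y := by
      simp [hB, heq]
    have hBcard' : (B y').card = k + 1 := by
      rw [hBy', Finset.card_insert_of_notMem hinotB, hBcard y hyT]
    rw [← hBcard']
    apply Finset.card_le_card_of_injOn (fun z => z.2)
    · rintro ⟨w, j⟩ hw
      obtain ⟨hwP, hwg⟩ := Finset.mem_filter.mp hw
      obtain ⟨hwT, hjA⟩ := Finset.mem_sigma.mp hwP
      obtain ⟨hne', heq'⟩ := hiFacts w j hjA
      simp only [hB, Finset.mem_coe, Finset.mem_filter, Finset.mem_univ, true_and]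
      refine ⟨hne', ?_⟩
      rw [← hwg, hg]
      simp only [BSCaux.flip_apply_same]
      rw [heq']
      simp
    · rintro ⟨w₁, j₁⟩ h₁ ⟨w₂, j₂⟩ h₂ hj
      simp only at hj
      subst hj
      obtain ⟨hw₁P, hw₁g⟩ := Finset.mem_filter.mp h₁
      obtain ⟨hw₂P, hw₂g⟩ := Finset.mem_filter.mp h₂
      have e₁ : w₁ = BSCaux.flip y' j₁ := by
        rw [← hw₁g, hg]
        exact (BSCaux.flip_flip w₁ j₁).symm
      have e₂ : w₂ = BSCaux.flip y' j₁ := by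
        rw [← hw₂g, hg]
        exact (BSCaux.flip_flip w₂ j₁).symm
      rw [e₁, e₂]
  have e1 : ∀ y ∈ T, ∑ i ∈ A y, ((1 - p) * bscW n p x (BSCaux.flip y i))
      = (k : ℝ) * (p * bscW n p x y) := by
    intro y hy
    rw [Finset.sum_congr rfl (fun i hi =>
      BSCaux.bscW_succ x y (BSCaux.flip y i) (hdfx y i hi)),
      Finset.sum_const, hAcard y hy, nsmul_eq_mul]
  have key : (k : ℝ) * (p * ∑ y ∈ T, bscW n p x y)
      ≤ (1 - p) * (((k : ℝ) + 1) * ∑ y' ∈ S, bscW n p x y') := by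
    have lhs_eq : (k : ℝ) * (p * ∑ y ∈ T, bscW n p x y)
        = (1 - p) * ∑ z ∈ P, bscW n p x (g z) := by
      rw [hP, Finset.sum_sigma]
      rw [Finset.mul_sum, Finset.mul_sum, Finset.mul_sum]
      apply Finset.sum_congr rfl
      intro y hy
      rw [← e1 y hy, Finset.mul_sum]
    rw [lhs_eq, ← step3]
    calc (1 - p) * ∑ y' ∈ S, ∑ z ∈ P.filter (fun z => g z = y'), bscW n p x (g z)
        ≤ (1 - p) * ∑ y' ∈ S, ((k : ℝ) + 1) * bscW n p x y' := by
          apply mul_le_mul_of_nonneg_left _ h1p.le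
          apply Finset.sum_le_sum
          intro y' hy'
          rw [step4 y' hy']
          have hW := BSCaux.bscW_nonneg (n := n) hp0 hp1 x y'
          have hc' : ((P.filter (fun z => g z = y')).card : ℝ) ≤ (k : ℝ) + 1 := by
            exact_mod_cast step5 y'
          nlinarith
      _ = (1 - p) * (((k : ℝ) + 1) * ∑ y' ∈ S, bscW n p x y') := by
          simp [Finset.mul_sum, mul_assoc]
  rw [ge_iff_le, div_mul_eq_mul_div, div_le_iff₀ (by positivity : (0:ℝ) < 2 * (1 - p))]
  have hk1' : (1 : ℝ) ≤ (k : ℝ) := by exact_mod_cast hk1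
  nlinarith [key, mul_nonneg h1p.le hSnonneg]
end

section
/- Consider the n-fold memoryless BSC with crossover probability p ∈ (0,1/2) and a code 𝒞_n = {x_{(1)}, …, x_{(M)}} ⊆ {0,1}^n with M ≥ 2 distinct codewords. For each i, let T_i = { y : d(x_{(i)}, y) = min_{u∈𝒞_n\{x_{(i)}}} d(u,y) } and N_i = { y : d(x_{(i)}, y) > min_{u∈𝒞_n\{x_{(i)}}} d(u,y) }. Then Pr( Y^n ∈ N_i | X^n = x_{(i)} ) ≥ (p / (2(1−p))) · (1/(M−1)) · Pr( Y^n ∈ T_i | X^n = x_{(i)} ). -/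
open scoped Classical BigOperators

open Finset

private def bflip {n : ℕ} (j : Fin n) (y : Fin n → Bool) : Fin n → Bool :=
  Function.update y j (!(y j))

private lemma bflip_bflip {n : ℕ} (j : Fin n) (y : Fin n → Bool) : bflip j (bflip j y) = y := by
  funext i
  by_cases h : i = j
  · subst h; simp [bflip]
  · simp [bflip, Function.update, h]

private lemma bflip_apply_self {n : ℕ} (j : Fin n) (y : Fin n → Bool) : bflip j y j = !(y j) := by
  simp [bflip]

private lemma bflip_apply_ne {n : ℕ} {i j : Fin n} (h : i ≠ j) (y : Fin n → Bool) :
    bflip j y i = y i := by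
  simp [bflip, Function.update, h]

private lemma hamming_bflip_eq {n : ℕ} {j : Fin n} {w y : Fin n → Bool} (h : w j = y j) :
    hammingDist w (bflip j y) = hammingDist w y + 1 := by
  have hset : ({i | w i ≠ bflip j y i} : Finset (Fin n)) = insert j ({i | w i ≠ y i} : Finset (Fin n)) := by
    ext i
    by_cases hij : i = j
    · subst hij
      simp [bflip_apply_self, h]
    · simp [bflip_apply_ne hij, hij]
  rw [hammingDist, hset, card_insert_of_notMem (by simp [h]), hammingDist]

private lemma hamming_bflip_ne {n : ℕ} {j : Fin n} {w y : Fin n → Bool} (h : w j ≠ y j) :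
    hammingDist w (bflip j y) + 1 = hammingDist w y := by
  have hset : ({i | w i ≠ bflip j y i} : Finset (Fin n)) = ({i | w i ≠ y i} : Finset (Fin n)).erase j := by
    ext i
    by_cases hij : i = j
    · subst hij
      simp [bflip_apply_self]
      cases hw : w i <;> cases hy : y i <;> simp_all
    · simp [bflip_apply_ne hij, hij]
  rw [hammingDist, hset, card_erase_add_one (by simp [h])]
  rfl

private lemma card_split {α : Type*} [Fintype α] (P Q : α → Prop) :
    #({a | P a} : Finset α) = #({a | P a ∧ Q a} : Finset α) + #({a | P a ∧ ¬ Q a} : Finset α) := by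
  have h := card_filter_add_card_filter_not (s := ({a | P a} : Finset α)) Q
  rw [filter_filter, filter_filter] at h
  exact h.symm

private lemma ham_c1c2 {n : ℕ} (x u y : Fin n → Bool) :
    hammingDist x y = #({i | x i ≠ y i ∧ u i ≠ y i} : Finset (Fin n))
      + #({i | x i ≠ y i ∧ u i = y i} : Finset (Fin n)) := by
  have h := card_split (fun i : Fin n => x i ≠ y i) (fun i => u i ≠ y i)
  unfold hammingDist
  convert h using 3
  · ext i; simp
  · ext i; simp [not_not]

private lemma ham_c2c3 {n : ℕ} (x u y : Fin n → Bool) :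
    hammingDist x u = #({i | x i ≠ y i ∧ u i = y i} : Finset (Fin n))
      + #({i | x i = y i ∧ u i ≠ y i} : Finset (Fin n)) := by
  have hcong : ({i | x i ≠ u i} : Finset (Fin n))
      = ({i | (x i ≠ y i ∧ u i = y i) ∨ (x i = y i ∧ u i ≠ y i)} : Finset (Fin n)) := by
    ext i
    simp only [mem_filter, mem_univ, true_and]
    cases hx : x i <;> cases hu : u i <;> cases hy : y i <;> simp
  have hdisj : Disjoint ({i | x i ≠ y i ∧ u i = y i} : Finset (Fin n))
      ({i | x i = y i ∧ u i ≠ y i} : Finset (Fin n)) := by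
    rw [disjoint_left]
    intro a ha hb
    simp only [mem_filter] at ha hb
    exact ha.2.1 hb.2.1
  rw [hammingDist, hcong, filter_or, card_union_of_disjoint hdisj]

private lemma ham_sub {n : ℕ} (x u y : Fin n → Bool) :
    hammingDist x y + #({i | x i = y i ∧ u i ≠ y i} : Finset (Fin n))
      = hammingDist u y + #({i | x i ≠ y i ∧ u i = y i} : Finset (Fin n)) := by
  rw [ham_c1c2 x u y, ham_c1c2 u x y]
  have h1 : #({i | u i ≠ y i ∧ x i ≠ y i} : Finset (Fin n))
      = #({i | x i ≠ y i ∧ u i ≠ y i} : Finset (Fin n)) := by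
    congr 1; ext i; simp only [mem_filter]; tauto
  have h2 : #({i | u i ≠ y i ∧ x i = y i} : Finset (Fin n))
      = #({i | x i = y i ∧ u i ≠ y i} : Finset (Fin n)) := by
    congr 1; ext i; simp only [mem_filter]; tauto
  rw [h1, h2]; ring

private lemma bscW_step {n : ℕ} {p : ℝ} (hp0 : 0 < p) (hp1 : p < 1)
    (x y y' : Fin n → Bool) (h : hammingDist x y' = hammingDist x y + 1) :
    bscW n p x y = ((1 - p) / p) * bscW n p x y' := by
  have hle : hammingDist x y' ≤ n := by
    have := hammingDist_le_card_fintype (x := x) (y := y')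
    simpa using this
  have hd : hammingDist x y + 1 ≤ n := h ▸ hle
  unfold bscW
  rw [h]
  have hnn : n - hammingDist x y = (n - (hammingDist x y + 1)) + 1 := by omega
  rw [hnn, pow_succ, pow_succ]
  have hp : p ≠ 0 := ne_of_gt hp0
  field_simp

/-- **Conditional probability of the strict set dominates that of the tie set.**
For the `n`-fold BSC with crossover probability `p ∈ (0,1/2)`, a code `C` of `M ≥ 2`
distinct codewords, and a codeword `x ∈ C`, with
`Tᵢ = {y : d(x,y) = min_{u∈C, u≠x} d(u,y)}` and
`Nᵢ = {y : d(x,y) > min_{u∈C, u≠x} d(u,y)}`, one has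
`Pr(Yⁿ ∈ Nᵢ | Xⁿ = x) ≥ (p/(2(1-p))) · (1/(M-1)) · Pr(Yⁿ ∈ Tᵢ | Xⁿ = x)`. -/
theorem stmt_16 (n : ℕ) (p : ℝ) (hp0 : 0 < p) (hp2 : p < 1 / 2)
    (C : Finset (Fin n → Bool)) (hC : 2 ≤ C.card)
    (x : Fin n → Bool) (hx : x ∈ C) :
    (∑ y ∈ Finset.univ.filter (fun y : Fin n → Bool =>
        dmin n C x y < hammingDist x y), bscW n p x y)
      ≥ (p / (2 * (1 - p))) * (1 / ((C.card : ℝ) - 1)) *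
        ∑ y ∈ Finset.univ.filter (fun y : Fin n → Bool =>
          hammingDist x y = dmin n C x y), bscW n p x y := by
  classical
  have hp1 : p < 1 := by linarith
  have hq0 : (0:ℝ) < 1 - p := by linarith
  have hWpos : ∀ y : Fin n → Bool, 0 < bscW n p x y := by
    intro y; unfold bscW; positivity
  set T : Finset (Fin n → Bool) :=
    Finset.univ.filter (fun y : Fin n → Bool => hammingDist x y = dmin n C x y) with hTdef
  set N : Finset (Fin n → Bool) :=
    Finset.univ.filter (fun y : Fin n → Bool => dmin n C x y < hammingDist x y) with hNdef
  have hNnonneg : (0:ℝ) ≤ ∑ y ∈ N, bscW n p x y :=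
    sum_nonneg fun y _ => (hWpos y).le
  -- existence of a codeword ≠ x
  obtain ⟨u0, hu0C, hu0x⟩ : ∃ u ∈ C, u ≠ x := by
    obtain ⟨a, haC, b, hbC, hab⟩ := Finset.one_lt_card.1 (by omega : 1 < C.card)
    by_cases ha : a = x
    · exact ⟨b, hbC, by rw [← ha]; exact fun h => hab h.symm⟩
    · exact ⟨a, haC, ha⟩
  have hex : ∀ y : Fin n → Bool, ∃ u, u ∈ C ∧ u ≠ x ∧ hammingDist u y = dmin n C x y := by
    intro y
    have hne : {d : ℕ | ∃ u ∈ C, u ≠ x ∧ d = hammingDist u y}.Nonempty :=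
      ⟨hammingDist u0 y, u0, hu0C, hu0x, rfl⟩
    obtain ⟨u, huC, hux, hd⟩ := Nat.sInf_mem hne
    exact ⟨u, huC, hux, hd.symm⟩
  choose uu huuC huux huud using hex
  have hdmin_le : ∀ (u : Fin n → Bool), u ∈ C → u ≠ x →
      ∀ y, dmin n C x y ≤ hammingDist u y := by
    intro u huC hux y
    exact Nat.sInf_le ⟨u, huC, hux, rfl⟩
  -- per-codeword inequality
  have key : ∀ u ∈ C.erase x,
      ∑ y ∈ T.filter (fun y => uu y = u), bscW n p x y
        ≤ 2 * ((1 - p) / p) * ∑ y' ∈ N, bscW n p x y' := by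
    intro u hu
    obtain ⟨hux, huC⟩ := Finset.mem_erase.1 hu
    set Tu : Finset (Fin n → Bool) := T.filter (fun y => uu y = u) with hTu
    by_cases hTune : Tu.Nonempty
    swap
    · rw [Finset.not_nonempty_iff_eq_empty.1 hTune, Finset.sum_empty]
      positivity
    -- distances for members of Tu
    have hTu_dist : ∀ y ∈ Tu, hammingDist u y = hammingDist x y ∧
        hammingDist x y = dmin n C x y := by
      intro y hy
      rw [hTu, Finset.mem_filter] at hy
      obtain ⟨hyT, hyu⟩ := hy
      rw [hTdef, Finset.mem_filter] at hyT
      refine ⟨?_, hyT.2⟩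
      rw [← hyu, huud y, hyT.2]
    -- the flip sets
    set S : (Fin n → Bool) → Finset (Fin n) :=
      fun y => ({i | x i = y i ∧ u i ≠ y i} : Finset (Fin n)) with hSdef
    set J : (Fin n → Bool) → Finset (Fin n) :=
      fun y => ({i | x i ≠ y i ∧ u i = y i} : Finset (Fin n)) with hJdef
    have hScard : ∀ y ∈ Tu, #(S y) + #(S y) = hammingDist x u := by
      intro y hy
      obtain ⟨h1, _⟩ := hTu_dist y hy
      have hs := ham_sub x u y
      have hc := ham_c2c3 x u y
      rw [h1] at hs
      simp only [hSdef, hJdef] at *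
      omega
    obtain ⟨y0, hy0⟩ := hTune
    set k : ℕ := #(S y0) with hk
    have hxu : hammingDist x u = k + k := (hScard y0 hy0).symm
    have hk1 : 1 ≤ k := by
      have : hammingDist x u ≠ 0 := hammingDist_ne_zero.2 fun h => hux h.symm
      omega
    have hSk : ∀ y ∈ Tu, #(S y) = k := by
      intro y hy
      have := hScard y hy
      omega
    -- the target set
    set Nu : Finset (Fin n → Bool) :=
      N.filter (fun y' => hammingDist u y' + 2 = hammingDist x y') with hNu
    have hJcard : ∀ y' ∈ Nu, #(J y') = k + 1 := by
      intro y' hy'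
      rw [hNu, Finset.mem_filter] at hy'
      have hs := ham_sub x u y'
      have hc := ham_c2c3 x u y'
      simp only [hSdef, hJdef] at *
      omega
    -- step A : flip identities
    have stepA : ∀ y ∈ Tu, ∀ j ∈ S y,
        bscW n p x y = ((1 - p) / p) * bscW n p x (bflip j y) := by
      intro y hy j hj
      simp only [hSdef, mem_filter] at hj
      exact bscW_step hp0 hp1 x y _ (hamming_bflip_eq hj.2.1)
    -- the injection into Nu.sigma J
    have himage : ∀ s ∈ Tu.sigma S,
        (⟨bflip s.2 s.1, s.2⟩ : Σ _ : Fin n → Bool, Fin n) ∈ Nu.sigma J := by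
      rintro ⟨y, j⟩ hs
      dsimp only
      rw [Finset.mem_sigma] at hs
      obtain ⟨hyTu, hjS⟩ := hs
      simp only [hSdef, mem_filter, mem_univ, true_and] at hjS
      obtain ⟨hxj, huj⟩ := hjS
      obtain ⟨hd1, hd2⟩ := hTu_dist y hyTu
      have hdx : hammingDist x (bflip j y) = hammingDist x y + 1 := hamming_bflip_eq hxj
      have hdu : hammingDist u (bflip j y) + 1 = hammingDist u y := hamming_bflip_ne huj
      rw [Finset.mem_sigma]
      dsimp only
      constructor
      · rw [hNu, Finset.mem_filter]
        constructor
        · rw [hNdef, Finset.mem_filter]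
          refine ⟨Finset.mem_univ _, ?_⟩
          have hle := hdmin_le u huC hux (bflip j y)
          omega
        · omega
      · simp only [hJdef, mem_filter, mem_univ, true_and]
        have h1 : bflip j y j = !(y j) := bflip_apply_self j y
        constructor
        · rw [h1, hxj]; cases y j <;> simp
        · rw [h1]
          revert huj
          cases u j <;> cases y j <;> simp
    have hinj : Set.InjOn (fun s : Σ _ : Fin n → Bool, Fin n =>
        (⟨bflip s.2 s.1, s.2⟩ : Σ _ : Fin n → Bool, Fin n)) ↑(Tu.sigma S) := by
      rintro ⟨y, j⟩ - ⟨y', j'⟩ - h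
      simp only [Sigma.mk.inj_iff] at h
      obtain ⟨h1, h2⟩ := h
      have hj : j = j' := by exact_mod_cast (heq_iff_eq.1 h2)
      subst hj
      have : bflip j (bflip j y) = bflip j (bflip j y') := by rw [h1]
      rw [bflip_bflip, bflip_bflip] at this
      simp [this]
    -- main chain
    have chain : (k:ℝ) * ∑ y ∈ Tu, bscW n p x y
        ≤ ((1 - p) / p) * ((k:ℝ) + 1) * ∑ y' ∈ N, bscW n p x y' := by
      have e1 : (k:ℝ) * ∑ y ∈ Tu, bscW n p x y
          = ∑ y ∈ Tu, ∑ j ∈ S y, ((1 - p) / p) * bscW n p x (bflip j y) := by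
        rw [Finset.mul_sum]
        refine Finset.sum_congr rfl fun y hy => ?_
        rw [Finset.sum_congr rfl fun j hj => (stepA y hy j hj).symm,
          Finset.sum_const, hSk y hy, nsmul_eq_mul]
      rw [e1]
      have hsubim : (Tu.sigma S).image (fun s : Σ _ : Fin n → Bool, Fin n =>
          (⟨bflip s.2 s.1, s.2⟩ : Σ _ : Fin n → Bool, Fin n)) ⊆ Nu.sigma J := by
        intro s hs
        rw [Finset.mem_image] at hs
        obtain ⟨t, ht, rfl⟩ := hs
        exact himage t ht
      have e2 : ∑ y ∈ Tu, ∑ j ∈ S y, ((1 - p) / p) * bscW n p x (bflip j y)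
          ≤ ∑ y' ∈ Nu, ∑ _j ∈ J y', ((1 - p) / p) * bscW n p x y' := by
        rw [Finset.sum_sigma' Tu S (fun y j => ((1 - p) / p) * bscW n p x (bflip j y)),
            Finset.sum_sigma' Nu J (fun y' _ => ((1 - p) / p) * bscW n p x y')]
        calc ∑ s ∈ Tu.sigma S, ((1 - p) / p) * bscW n p x (bflip s.2 s.1)
            = ∑ s ∈ (Tu.sigma S).image (fun s : Σ _ : Fin n → Bool, Fin n =>
                (⟨bflip s.2 s.1, s.2⟩ : Σ _ : Fin n → Bool, Fin n)),
                ((1 - p) / p) * bscW n p x s.1 :=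
              (Finset.sum_image (f := fun s : Σ _ : Fin n → Bool, Fin n =>
                ((1 - p) / p) * bscW n p x s.1) (fun a ha b hb => hinj ha hb)).symm
          _ ≤ ∑ s ∈ Nu.sigma J, ((1 - p) / p) * bscW n p x s.1 :=
              Finset.sum_le_sum_of_subset_of_nonneg hsubim (fun s _ _ =>
                mul_nonneg (by positivity) (hWpos _).le)
      refine le_trans e2 ?_
      have e3 : ∑ y' ∈ Nu, ∑ _j ∈ J y', ((1 - p) / p) * bscW n p x y'
          = ((1 - p) / p) * ((k:ℝ) + 1) * ∑ y' ∈ Nu, bscW n p x y' := by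
        rw [Finset.mul_sum]
        refine Finset.sum_congr rfl fun y' hy' => ?_
        rw [Finset.sum_const, hJcard y' hy', nsmul_eq_mul]
        push_cast
        ring
      rw [e3]
      have hsub : ∑ y' ∈ Nu, bscW n p x y' ≤ ∑ y' ∈ N, bscW n p x y' :=
        Finset.sum_le_sum_of_subset_of_nonneg (Finset.filter_subset _ _)
          fun y' _ _ => (hWpos y').le
      have hcpos : (0:ℝ) ≤ ((1 - p) / p) * ((k:ℝ) + 1) := by positivity
      exact mul_le_mul_of_nonneg_left hsub hcpos
    -- divide by k
    have hk0 : (0:ℝ) < (k:ℝ) := by exact_mod_cast hk1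
    have : (k:ℝ) * ∑ y ∈ Tu, bscW n p x y
        ≤ (k:ℝ) * (2 * ((1 - p) / p) * ∑ y' ∈ N, bscW n p x y') := by
      refine le_trans chain ?_
      have hcoef : ((1 - p) / p) * ((k:ℝ) + 1) ≤ (k:ℝ) * (2 * ((1 - p) / p)) := by
        have h1 : ((k:ℝ) + 1) ≤ 2 * (k:ℝ) := by
          have : (1:ℝ) ≤ (k:ℝ) := by exact_mod_cast hk1
          linarith
        have h2 : (0:ℝ) ≤ (1 - p) / p := by positivity
        nlinarith
      calc ((1 - p) / p) * ((k:ℝ) + 1) * ∑ y' ∈ N, bscW n p x y'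
          ≤ (k:ℝ) * (2 * ((1 - p) / p)) * ∑ y' ∈ N, bscW n p x y' :=
            mul_le_mul_of_nonneg_right hcoef hNnonneg
        _ = (k:ℝ) * (2 * ((1 - p) / p) * ∑ y' ∈ N, bscW n p x y') := by ring
    exact le_of_mul_le_mul_left this hk0
  -- sum over codewords
  have fib : ∑ u ∈ C.erase x, ∑ y ∈ T.filter (fun y => uu y = u), bscW n p x y
      = ∑ y ∈ T, bscW n p x y :=
    Finset.sum_fiberwise_of_maps_to
      (fun y _ => Finset.mem_erase.2 ⟨huux y, huuC y⟩) _
  have total : ∑ y ∈ T, bscW n p x y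
      ≤ ((C.card : ℝ) - 1) * (2 * ((1 - p) / p)) * ∑ y' ∈ N, bscW n p x y' := by
    rw [← fib]
    calc ∑ u ∈ C.erase x, ∑ y ∈ T.filter (fun y => uu y = u), bscW n p x y
        ≤ ∑ _u ∈ C.erase x, 2 * ((1 - p) / p) * ∑ y' ∈ N, bscW n p x y' :=
          Finset.sum_le_sum key
      _ = ((C.erase x).card : ℝ) * (2 * ((1 - p) / p) * ∑ y' ∈ N, bscW n p x y') := by
          rw [Finset.sum_const, nsmul_eq_mul]
      _ = ((C.card : ℝ) - 1) * (2 * ((1 - p) / p)) * ∑ y' ∈ N, bscW n p x y' := by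
          rw [Finset.card_erase_of_mem hx]
          have h2 : (1:ℕ) ≤ C.card := by omega
          rw [Nat.cast_sub h2]
          push_cast
          ring
  -- final algebra
  have hM1 : (1:ℝ) ≤ (C.card : ℝ) - 1 := by
    have : (2:ℝ) ≤ (C.card : ℝ) := by exact_mod_cast hC
    linarith
  have hM0 : (C.card : ℝ) - 1 ≠ 0 := by linarith
  rw [ge_iff_le]
  have hcpos : (0:ℝ) ≤ p / (2 * (1 - p)) * (1 / ((C.card : ℝ) - 1)) := by positivity
  calc p / (2 * (1 - p)) * (1 / ((C.card : ℝ) - 1)) * ∑ y ∈ T, bscW n p x y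
      ≤ p / (2 * (1 - p)) * (1 / ((C.card : ℝ) - 1)) *
        (((C.card : ℝ) - 1) * (2 * ((1 - p) / p)) * ∑ y' ∈ N, bscW n p x y') :=
        mul_le_mul_of_nonneg_left total hcpos
    _ = ∑ y' ∈ N, bscW n p x y' := by
        field_simp
end

section
/- Consider the n-fold memoryless BSC with crossover probability p ∈ (0,1/2), a code 𝒞_n ⊆ {0,1}^n with M_n = |𝒞_n| ≥ 2, and X^n uniform on 𝒞_n. Let b_n = P_{X^n,Y^n}(NT(𝒞_n)) and δ_n = P_{X^n,Y^n}(T(𝒞_n)). Then b_n ≥ (p / (2(1−p))) · (1/(M_n − 1)) · δ_n. -/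
open scoped Classical BigOperators

namespace S17
variable {n : ℕ}

def flp (y : Fin n → Bool) (i : Fin n) : Fin n → Bool := Function.update y i (!(y i))

lemma flp_flp (y : Fin n → Bool) (i : Fin n) : flp (flp y i) i = y := by
  funext j
  rcases eq_or_ne j i with rfl | h
  · simp [flp]
  · simp [flp, Function.update_of_ne h]

lemma hamming_flp_of_eq (a y : Fin n → Bool) (i : Fin n) (h : a i = y i) :
    hammingDist a (flp y i) = hammingDist a y + 1 := by
  have hset : (Finset.univ.filter fun j => a j ≠ flp y i j)
      = insert i (Finset.univ.filter fun j => a j ≠ y j) := by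
    ext j
    simp only [Finset.mem_insert, Finset.mem_filter, Finset.mem_univ, true_and]
    rcases eq_or_ne j i with rfl | hj
    · simp only [flp, Function.update_self, h, eq_self_iff_true, true_or, iff_true]
      cases y j <;> simp [h]
    · simp [flp, Function.update_of_ne hj, hj]
  have hnot : i ∉ (Finset.univ.filter fun j => a j ≠ y j) := by simp [h]
  show (Finset.univ.filter fun j => a j ≠ flp y i j).card = _
  rw [hset, Finset.card_insert_of_notMem hnot]
  rfl

lemma hamming_flp_of_ne (a y : Fin n → Bool) (i : Fin n) (h : a i ≠ y i) :
    hammingDist a (flp y i) + 1 = hammingDist a y := by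
  have ha : a i = !(y i) := by cases hx : a i <;> cases hy : y i <;> simp_all
  have hset : (Finset.univ.filter fun j => a j ≠ y j)
      = insert i (Finset.univ.filter fun j => a j ≠ flp y i j) := by
    ext j
    simp only [Finset.mem_insert, Finset.mem_filter, Finset.mem_univ, true_and]
    rcases eq_or_ne j i with rfl | hj
    · simp [h]
    · simp [flp, Function.update_of_ne hj, hj]
  have hnot : i ∉ (Finset.univ.filter fun j => a j ≠ flp y i j) := by
    rw [Finset.mem_filter]
    simp [flp, ha]
  have : (Finset.univ.filter fun j => a j ≠ y j).card
      = (Finset.univ.filter fun j => a j ≠ flp y i j).card + 1 := by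
    rw [hset, Finset.card_insert_of_notMem hnot]
  show (Finset.univ.filter fun j => a j ≠ flp y i j).card + 1
      = (Finset.univ.filter fun j => a j ≠ y j).card
  omega

lemma dmin_le {C : Finset (Fin n → Bool)} {x u : Fin n → Bool} (y : Fin n → Bool)
    (hu : u ∈ C) (hux : u ≠ x) : dmin n C x y ≤ hammingDist u y :=
  Nat.sInf_le ⟨u, hu, hux, rfl⟩

noncomputable def wit (n : ℕ) (C : Finset (Fin n → Bool)) (x y : Fin n → Bool) :
    Fin n → Bool :=
  if h : ∃ u, u ∈ C ∧ u ≠ x ∧ hammingDist u y = dmin n C x y then h.choose else x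

lemma wit_spec {C : Finset (Fin n → Bool)} {x : Fin n → Bool} (hC : 2 ≤ C.card)
    (hx : x ∈ C) (y : Fin n → Bool) :
    wit n C x y ∈ C ∧ wit n C x y ≠ x ∧ hammingDist (wit n C x y) y = dmin n C x y := by
  obtain ⟨v, hv, hvx⟩ := Finset.exists_mem_ne (s := C) (by omega) x
  have hne : {d : ℕ | ∃ u ∈ C, u ≠ x ∧ d = hammingDist u y}.Nonempty :=
    ⟨hammingDist v y, v, hv, hvx, rfl⟩
  have hmem : dmin n C x y ∈ {d : ℕ | ∃ u ∈ C, u ≠ x ∧ d = hammingDist u y} :=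
    Nat.sInf_mem hne
  obtain ⟨u, hu, hux, hud⟩ := hmem
  have h : ∃ u, u ∈ C ∧ u ≠ x ∧ hammingDist u y = dmin n C x y := ⟨u, hu, hux, hud.symm⟩
  rw [wit, dif_pos h]
  exact h.choose_spec

lemma diff_nonempty {x u : Fin n → Bool} (h : u ≠ x) :
    (Finset.univ.filter fun i => x i ≠ u i).Nonempty := by
  obtain ⟨i, hi⟩ := Function.ne_iff.mp h.symm
  exact ⟨i, by simp [hi]⟩

noncomputable def phi (n : ℕ) (C : Finset (Fin n → Bool))
    (q : (Fin n → Bool) × (Fin n → Bool)) : (Fin n → Bool) × (Fin n → Bool) :=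
  if h : (Finset.univ.filter fun i => q.1 i ≠ wit n C q.1 q.2 i).Nonempty then
    if q.1 ((Finset.univ.filter fun i => q.1 i ≠ wit n C q.1 q.2 i).min' h)
        = q.2 ((Finset.univ.filter fun i => q.1 i ≠ wit n C q.1 q.2 i).min' h) then
      (q.1, flp q.2 ((Finset.univ.filter fun i => q.1 i ≠ wit n C q.1 q.2 i).min' h))
    else
      (wit n C q.1 q.2,
        flp q.2 ((Finset.univ.filter fun i => q.1 i ≠ wit n C q.1 q.2 i).min' h))
  else q

/-- Case characterization of `phi` on tie pairs. -/
lemma phi_cases {C : Finset (Fin n → Bool)} (hC : 2 ≤ C.card)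
    {q : (Fin n → Bool) × (Fin n → Bool)} (hx : q.1 ∈ C) :
    ∃ h : (Finset.univ.filter fun i => q.1 i ≠ wit n C q.1 q.2 i).Nonempty,
      (q.1 ((Finset.univ.filter fun i => q.1 i ≠ wit n C q.1 q.2 i).min' h)
          = q.2 ((Finset.univ.filter fun i => q.1 i ≠ wit n C q.1 q.2 i).min' h) ∧
        phi n C q = (q.1,
          flp q.2 ((Finset.univ.filter fun i => q.1 i ≠ wit n C q.1 q.2 i).min' h))) ∨
      (q.1 ((Finset.univ.filter fun i => q.1 i ≠ wit n C q.1 q.2 i).min' h)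
          ≠ q.2 ((Finset.univ.filter fun i => q.1 i ≠ wit n C q.1 q.2 i).min' h) ∧
        phi n C q = (wit n C q.1 q.2,
          flp q.2 ((Finset.univ.filter fun i => q.1 i ≠ wit n C q.1 q.2 i).min' h))) := by
  obtain ⟨hw, hwx, hwd⟩ := wit_spec hC hx q.2
  have h := diff_nonempty hwx
  refine ⟨h, ?_⟩
  by_cases hcase : q.1 ((Finset.univ.filter fun i => q.1 i ≠ wit n C q.1 q.2 i).min' h)
      = q.2 ((Finset.univ.filter fun i => q.1 i ≠ wit n C q.1 q.2 i).min' h)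
  · exact Or.inl ⟨hcase, by rw [phi, dif_pos h, if_pos hcase]⟩
  · exact Or.inr ⟨hcase, by rw [phi, dif_pos h, if_neg hcase]⟩

lemma phi_main {C : Finset (Fin n → Bool)} (hC : 2 ≤ C.card)
    {q : (Fin n → Bool) × (Fin n → Bool)} (hx : q.1 ∈ C)
    (htie : hammingDist q.1 q.2 = dmin n C q.1 q.2) :
    (phi n C q).1 ∈ C ∧
      dmin n C (phi n C q).1 (phi n C q).2 < hammingDist (phi n C q).1 (phi n C q).2 ∧
      hammingDist (phi n C q).1 (phi n C q).2 = hammingDist q.1 q.2 + 1 := by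
  obtain ⟨hw, hwx, hwd⟩ := wit_spec hC hx q.2
  obtain ⟨h, hcase⟩ := phi_cases hC (q := q) hx
  set i := (Finset.univ.filter fun i => q.1 i ≠ wit n C q.1 q.2 i).min' h with hidef
  have hiu : q.1 i ≠ wit n C q.1 q.2 i := by
    have := Finset.min'_mem _ h
    rw [← hidef] at this
    simpa using this
  rcases hcase with ⟨heq, hphi⟩ | ⟨hne, hphi⟩
  · -- case A : phi q = (q.1, flp q.2 i)
    have hu2 : wit n C q.1 q.2 i ≠ q.2 i := fun hh => hiu (heq.trans hh.symm)
    have hd1 : hammingDist q.1 (flp q.2 i) = hammingDist q.1 q.2 + 1 :=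
      hamming_flp_of_eq _ _ _ heq
    have hd2 : hammingDist (wit n C q.1 q.2) (flp q.2 i) + 1
        = hammingDist (wit n C q.1 q.2) q.2 := hamming_flp_of_ne _ _ _ hu2
    have hle : dmin n C q.1 (flp q.2 i) ≤ hammingDist (wit n C q.1 q.2) (flp q.2 i) :=
      dmin_le _ hw hwx
    rw [hphi]
    exact ⟨hx, by dsimp only; omega, by dsimp only; omega⟩
  · -- case B : phi q = (wit, flp q.2 i)
    have hu2 : wit n C q.1 q.2 i = q.2 i := by
      have : ∀ a b c : Bool, a ≠ b → a ≠ c → b = c := by decide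
      exact this _ _ _ hiu hne
    have hd1 : hammingDist (wit n C q.1 q.2) (flp q.2 i)
        = hammingDist (wit n C q.1 q.2) q.2 + 1 := hamming_flp_of_eq _ _ _ hu2
    have hd2 : hammingDist q.1 (flp q.2 i) + 1 = hammingDist q.1 q.2 :=
      hamming_flp_of_ne _ _ _ hne
    have hle : dmin n C (wit n C q.1 q.2) (flp q.2 i) ≤ hammingDist q.1 (flp q.2 i) :=
      dmin_le _ hx (Ne.symm hwx)
    rw [hphi]
    exact ⟨hw, by dsimp only; omega, by dsimp only; omega⟩

lemma fiber_card {C : Finset (Fin n → Bool)} (hC : 2 ≤ C.card)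
    (b : (Fin n → Bool) × (Fin n → Bool)) (hb : b.1 ∈ C) :
    ((Finset.univ.filter fun q : (Fin n → Bool) × (Fin n → Bool) =>
        q.1 ∈ C ∧ hammingDist q.1 q.2 = dmin n C q.1 q.2).filter
      fun q => phi n C q = b).card ≤ 2 * (C.card - 1) := by
  classical
  have hkey : ((Finset.univ.filter fun q : (Fin n → Bool) × (Fin n → Bool) =>
        q.1 ∈ C ∧ hammingDist q.1 q.2 = dmin n C q.1 q.2).filter
      fun q => phi n C q = b).card ≤ ((C.erase b.1) ×ˢ (Finset.univ : Finset Bool)).card := by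
    apply Finset.card_le_card_of_injOn
      (fun q => (if q.1 = b.1 then wit n C q.1 q.2 else q.1, decide (q.1 = b.1)))
    · -- maps into
      intro q hq
      simp only [Finset.mem_coe, Finset.mem_filter, Finset.mem_univ, true_and] at hq
      obtain ⟨⟨hx, htie⟩, hphi⟩ := hq
      obtain ⟨hw, hwx, hwd⟩ := wit_spec hC hx q.2
      obtain ⟨h, hcase⟩ := phi_cases hC (q := q) hx
      simp only [Finset.mem_coe, Finset.mem_product, Finset.mem_univ, and_true, Finset.mem_erase]
      rcases hcase with ⟨heq, hp⟩ | ⟨hne, hp⟩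
      · have hb1 : q.1 = b.1 := (Prod.ext_iff.mp (hp.symm.trans hphi)).1
        simp only [if_pos hb1]
        exact ⟨by rw [← hb1]; exact hwx, hw⟩
      · have hb1 : b.1 = wit n C q.1 q.2 := ((Prod.ext_iff.mp (hp.symm.trans hphi)).1).symm
        have hq1b : q.1 ≠ b.1 := by rw [hb1]; exact Ne.symm hwx
        simp only [if_neg hq1b]
        exact ⟨hq1b, hx⟩
    · -- injective on fiber
      intro q hq q' hq' hf
      simp only [Finset.coe_filter, Set.mem_setOf_eq, Finset.mem_filter, Finset.mem_univ,
        true_and] at hq hq'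
      obtain ⟨⟨hx, htie⟩, hphi⟩ := hq
      obtain ⟨⟨hx', htie'⟩, hphi'⟩ := hq'
      have hflag : (q.1 = b.1) ↔ (q'.1 = b.1) := by
        have := congrArg Prod.snd hf
        simpa using this
      have hfst := congrArg Prod.fst hf
      obtain ⟨hw, hwx, hwd⟩ := wit_spec hC hx q.2
      obtain ⟨hw', hwx', hwd'⟩ := wit_spec hC hx' q'.2
      obtain ⟨h, hcase⟩ := phi_cases hC (q := q) hx
      obtain ⟨h', hcase'⟩ := phi_cases hC (q := q') hx'
      -- determine cases by flags
      rcases hcase with ⟨heq, hp⟩ | ⟨hne, hp⟩ <;> rcases hcase' with ⟨heq', hp'⟩ | ⟨hne', hp'⟩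
      · -- both A
        have hb1 : q.1 = b.1 := (Prod.ext_iff.mp (hp.symm.trans hphi)).1
        have hb1' : q'.1 = b.1 := (Prod.ext_iff.mp (hp'.symm.trans hphi')).1
        have h11 : q.1 = q'.1 := hb1.trans hb1'.symm
        simp only [if_pos hb1, if_pos hb1'] at hfst
        have hwe : wit n C q.1 q.2 = wit n C q'.1 q'.2 := hfst
        have hfil : (Finset.univ.filter fun j => q.1 j ≠ wit n C q.1 q.2 j)
            = (Finset.univ.filter fun j => q'.1 j ≠ wit n C q'.1 q'.2 j) := by
          rw [hwe, h11]
        have hi : (Finset.univ.filter fun j => q.1 j ≠ wit n C q.1 q.2 j).min' h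
            = (Finset.univ.filter fun j => q'.1 j ≠ wit n C q'.1 q'.2 j).min' h' := by
          congr 1
        have h2 : flp q.2 ((Finset.univ.filter fun j => q.1 j ≠ wit n C q.1 q.2 j).min' h)
            = b.2 := (Prod.ext_iff.mp (hp.symm.trans hphi)).2
        have h2' : flp q'.2 ((Finset.univ.filter fun j => q'.1 j ≠ wit n C q'.1 q'.2 j).min' h')
            = b.2 := (Prod.ext_iff.mp (hp'.symm.trans hphi')).2
        have hq2 : q.2 = q'.2 := by
          have e1 := congrArg (fun z => flp z ((Finset.univ.filter fun j => q.1 j ≠ wit n C q.1 q.2 j).min' h)) h2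
          have e2 := congrArg (fun z => flp z ((Finset.univ.filter fun j => q'.1 j ≠ wit n C q'.1 q'.2 j).min' h')) h2'
          rw [flp_flp] at e1 e2
          rw [e1, e2, hi]
        exact Prod.ext h11 hq2
      · -- A vs B : contradiction via flags
        have hb1 : q.1 = b.1 := (Prod.ext_iff.mp (hp.symm.trans hphi)).1
        have hb1' : b.1 = wit n C q'.1 q'.2 := ((Prod.ext_iff.mp (hp'.symm.trans hphi')).1).symm
        exact absurd (hflag.mp hb1) (by rw [hb1']; exact Ne.symm hwx')
      · -- B vs A
        have hb1' : q'.1 = b.1 := (Prod.ext_iff.mp (hp'.symm.trans hphi')).1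
        have hb1 : b.1 = wit n C q.1 q.2 := ((Prod.ext_iff.mp (hp.symm.trans hphi)).1).symm
        exact absurd (hflag.mpr hb1') (by rw [hb1]; exact Ne.symm hwx)
      · -- both B
        have hb1 : b.1 = wit n C q.1 q.2 := ((Prod.ext_iff.mp (hp.symm.trans hphi)).1).symm
        have hb1' : b.1 = wit n C q'.1 q'.2 := ((Prod.ext_iff.mp (hp'.symm.trans hphi')).1).symm
        have hq1b : q.1 ≠ b.1 := by rw [hb1]; exact Ne.symm hwx
        have hq1b' : q'.1 ≠ b.1 := by rw [hb1']; exact Ne.symm hwx'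
        simp only [if_neg hq1b, if_neg hq1b'] at hfst
        have h11 : q.1 = q'.1 := hfst
        have hwe : wit n C q.1 q.2 = wit n C q'.1 q'.2 := hb1.symm.trans hb1'
        have hfil : (Finset.univ.filter fun j => q.1 j ≠ wit n C q.1 q.2 j)
            = (Finset.univ.filter fun j => q'.1 j ≠ wit n C q'.1 q'.2 j) := by
          rw [hwe, h11]
        have hi : (Finset.univ.filter fun j => q.1 j ≠ wit n C q.1 q.2 j).min' h
            = (Finset.univ.filter fun j => q'.1 j ≠ wit n C q'.1 q'.2 j).min' h' := by
          congr 1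
        have h2 : flp q.2 ((Finset.univ.filter fun j => q.1 j ≠ wit n C q.1 q.2 j).min' h)
            = b.2 := (Prod.ext_iff.mp (hp.symm.trans hphi)).2
        have h2' : flp q'.2 ((Finset.univ.filter fun j => q'.1 j ≠ wit n C q'.1 q'.2 j).min' h')
            = b.2 := (Prod.ext_iff.mp (hp'.symm.trans hphi')).2
        have hq2 : q.2 = q'.2 := by
          have e1 := congrArg (fun z => flp z ((Finset.univ.filter fun j => q.1 j ≠ wit n C q.1 q.2 j).min' h)) h2
          have e2 := congrArg (fun z => flp z ((Finset.univ.filter fun j => q'.1 j ≠ wit n C q'.1 q'.2 j).min' h')) h2'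
          rw [flp_flp] at e1 e2
          rw [e1, e2, hi]
        exact Prod.ext h11 hq2
  have hcard : ((C.erase b.1) ×ˢ (Finset.univ : Finset Bool)).card = (C.card - 1) * 2 := by
    rw [Finset.card_product, Finset.card_erase_of_mem hb, Finset.card_univ, Fintype.card_bool]
  omega

lemma bsc_nonneg {p : ℝ} (hp0 : 0 ≤ p) (hp1 : p ≤ 1) (C : Finset (Fin n → Bool))
    (x y : Fin n → Bool) : 0 ≤ bscJoint n p C x y := by
  unfold bscJoint
  have h1 : (0:ℝ) ≤ 1 - p := by linarith
  apply mul_nonneg (mul_nonneg _ (pow_nonneg hp0 _)) (pow_nonneg h1 _)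
  split_ifs
  · positivity
  · exact le_refl 0

lemma bsc_ratio {p : ℝ} {C : Finset (Fin n → Bool)} {x x' y y' : Fin n → Bool}
    (hx : x ∈ C) (hx' : x' ∈ C)
    (hd : hammingDist x' y' = hammingDist x y + 1) :
    bscJoint n p C x' y' * (1 - p) = p * bscJoint n p C x y := by
  have hle : hammingDist x' y' ≤ n := by
    have := hammingDist_le_card_fintype (x := x') (y := y')
    simpa using this
  rw [bscJoint, bscJoint, if_pos hx, if_pos hx', hd]
  have h1 : n - hammingDist x y = (n - (hammingDist x y + 1)) + 1 := by omega
  rw [h1, pow_succ, pow_succ]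
  ring

end S17

/-- **`bₙ ≥ (p/(2(1-p))) · (1/(Mₙ-1)) · δₙ`** for the `n`-fold BSC with crossover
probability `p ∈ (0,1/2)`, a code `C` with `Mₙ = |C| ≥ 2` and uniform input on `C`. -/


theorem stmt_17 (n : ℕ) (p : ℝ) (hp0 : 0 < p) (hp2 : p < 1 / 2)
    (C : Finset (Fin n → Bool)) (hC : 2 ≤ C.card) :
    bNT n p C ≥ (p / (2 * (1 - p))) * (1 / ((C.card : ℝ) - 1)) * deltaT n p C := by
  classical
  have hp1 : p < 1 := by linarith
  have h1p : 0 < 1 - p := by linarith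
  have hM2 : (2:ℝ) ≤ (C.card:ℝ) := by exact_mod_cast hC
  have hM1 : (0:ℝ) < (C.card:ℝ) - 1 := by linarith
  set D := Finset.univ.filter (fun q : (Fin n → Bool) × (Fin n → Bool) =>
      q.1 ∈ C ∧ hammingDist q.1 q.2 = dmin n C q.1 q.2) with hD
  set N := Finset.univ.filter (fun q : (Fin n → Bool) × (Fin n → Bool) =>
      q.1 ∈ C ∧ dmin n C q.1 q.2 < hammingDist q.1 q.2) with hN
  have hmemD : ∀ q ∈ D, q.1 ∈ C ∧ hammingDist q.1 q.2 = dmin n C q.1 q.2 := by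
    intro q hq
    rw [hD] at hq
    exact (Finset.mem_filter.mp hq).2
  have hsum1 : p * deltaT n p C
      = (1 - p) * ∑ q ∈ D, bscJoint n p C (S17.phi n C q).1 (S17.phi n C q).2 := by
    rw [deltaT, ← hD, Finset.mul_sum, Finset.mul_sum]
    refine Finset.sum_congr rfl fun q hq => ?_
    obtain ⟨hx, htie⟩ := hmemD q hq
    obtain ⟨h1, h2, h3⟩ := S17.phi_main hC hx htie
    have := S17.bsc_ratio (p := p) hx h1 h3
    linarith
  have himg : D.image (S17.phi n C) ⊆ N := by
    intro b hb
    obtain ⟨q, hq, rfl⟩ := Finset.mem_image.mp hb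
    obtain ⟨hx, htie⟩ := hmemD q hq
    obtain ⟨h1, h2, _⟩ := S17.phi_main hC hx htie
    rw [hN]
    exact Finset.mem_filter.mpr ⟨Finset.mem_univ _, h1, h2⟩
  have hsum2 : ∑ q ∈ D, bscJoint n p C (S17.phi n C q).1 (S17.phi n C q).2
      ≤ (2 * ((C.card:ℝ) - 1)) * bNT n p C := by
    calc ∑ q ∈ D, bscJoint n p C (S17.phi n C q).1 (S17.phi n C q).2
        = ∑ b ∈ D.image (S17.phi n C),
            (D.filter fun q => S17.phi n C q = b).card • (bscJoint n p C b.1 b.2) :=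
          Finset.sum_comp (s := D) (fun b => bscJoint n p C b.1 b.2) (S17.phi n C)
      _ ≤ ∑ b ∈ D.image (S17.phi n C), (2 * ((C.card:ℝ) - 1)) * bscJoint n p C b.1 b.2 := by
          refine Finset.sum_le_sum fun b hb => ?_
          rw [nsmul_eq_mul]
          refine mul_le_mul_of_nonneg_right ?_ (S17.bsc_nonneg hp0.le (by linarith) C b.1 b.2)
          obtain ⟨q, hq, hqb⟩ := Finset.mem_image.mp hb
          obtain ⟨hx, htie⟩ := hmemD q hq
          obtain ⟨h1, _, _⟩ := S17.phi_main hC hx htie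
          rw [hqb] at h1
          have hcard := S17.fiber_card hC b h1
          rw [← hD] at hcard
          have h2 : ((2 * (C.card - 1) : ℕ) : ℝ) = 2 * ((C.card:ℝ) - 1) := by
            rw [Nat.cast_mul, Nat.cast_sub (by omega : 1 ≤ C.card)]
            norm_num
          rw [← h2]
          exact_mod_cast hcard
      _ ≤ ∑ b ∈ N, (2 * ((C.card:ℝ) - 1)) * bscJoint n p C b.1 b.2 :=
          Finset.sum_le_sum_of_subset_of_nonneg himg (fun b _ _ =>
            mul_nonneg (by linarith) (S17.bsc_nonneg hp0.le (by linarith) C b.1 b.2))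
      _ = (2 * ((C.card:ℝ) - 1)) * bNT n p C := by
          rw [bNT, ← hN, Finset.mul_sum]
  have key : p * deltaT n p C ≤ (1 - p) * ((2 * ((C.card:ℝ) - 1)) * bNT n p C) := by
    rw [hsum1]
    exact mul_le_mul_of_nonneg_left hsum2 h1p.le
  rw [ge_iff_le]
  have hne1 : (1 - p) ≠ 0 := ne_of_gt h1p
  have hne2 : ((C.card:ℝ) - 1) ≠ 0 := ne_of_gt hM1
  have heq : p / (2 * (1 - p)) * (1 / ((C.card:ℝ) - 1)) * deltaT n p C
      = (p * deltaT n p C) / (2 * (1 - p) * ((C.card:ℝ) - 1)) := by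
    field_simp
  rw [heq, div_le_iff₀ (by positivity)]
  calc p * deltaT n p C ≤ (1 - p) * ((2 * ((C.card:ℝ) - 1)) * bNT n p C) := key
    _ = bNT n p C * (2 * (1 - p) * ((C.card:ℝ) - 1)) := by ring
end
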